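/- arXiv:1510.07852 — 7 statements merged into one kernel-verified Lean document; each statement's English description precedes it below -/
import Mathlib

section
/- Let R be a commutative ring, d ≥ 1 an integer, and let g ∈ R[t_1,…,t_d] be a symmetric polynomial (invariant under every permutation of the variables). Set Λ := g · ∏_{1≤i<j≤d}(t_i − t_j). Then for every integer e ≥ d, the coefficient of the monomial ∏_{j=1}^{d} t_j^{e−j} in Λ · ∏_{1≤i<j≤d}(t_i + t_j) equals the coefficient of the same monomial ∏_{j=1}^{d} t_j^{e−j} in Λ · ∏_{j=1}^{d} t_j^{j−1}. -/
open MvPolynomial Finset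

private lemma sum_single_eq {M : Type*} [AddCommMonoid M] {d : ℕ} (m : Fin d → M) :
    ∑ i : Fin d, Finsupp.single i (m i) = Finsupp.equivFunOnFinite.symm m := by
  ext k
  simp [Finsupp.finset_sum_apply, Finsupp.single_apply]

private lemma sum_single_comp {M : Type*} [AddCommMonoid M] {d : ℕ}
    (σ : Equiv.Perm (Fin d)) (n : Fin d → M) :
    ∑ i : Fin d, Finsupp.single (σ i) (n i)
      = Finsupp.equivFunOnFinite.symm fun k => n (σ⁻¹ k) := by
  rw [← sum_single_eq fun k => n (σ⁻¹ k),
    ← Equiv.sum_comp σ (fun k => Finsupp.single k (n (σ⁻¹ k)))]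
  simp

private lemma perm_inv_apply_self {α : Type*} (f : Equiv.Perm α) (x : α) : f⁻¹ (f x) = x :=
  f.symm_apply_apply x

private lemma perm_apply_inv_self {α : Type*} (f : Equiv.Perm α) (x : α) : f (f⁻¹ x) = x :=
  f.apply_symm_apply x

private lemma prod_monomial_one {R : Type*} [CommSemiring R] {ι τ : Type*}
    (s : Finset ι) (F : ι → (τ →₀ ℕ)) :
    ∏ i ∈ s, (monomial (F i) (1 : R)) = monomial (∑ i ∈ s, F i) 1 := by
  classical
  induction s using Finset.induction with
  | empty => simp [monomial_zero']
  | @insert a s h ih =>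
      rw [Finset.prod_insert h, Finset.sum_insert h, ih, monomial_mul, one_mul]

private lemma prod_sub_eq {S : Type*} [CommRing S] {d : ℕ} (v : Fin d → S) :
    ∏ i : Fin d, ∏ j ∈ Finset.Ioi i, (v i - v j)
      = (∏ i : Fin d, ∏ j ∈ Finset.Ioi i, (-1 : S)) *
        ∑ σ : Equiv.Perm (Fin d),
          ((Equiv.Perm.sign σ : ℤ) : S) * ∏ i : Fin d, v (σ i) ^ (i : ℕ) := by
  have h1 : ∑ σ : Equiv.Perm (Fin d),
      ((Equiv.Perm.sign σ : ℤ) : S) * ∏ i : Fin d, v (σ i) ^ (i : ℕ)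
      = ∏ i : Fin d, ∏ j ∈ Finset.Ioi i, (v j - v i) := by
    rw [← Matrix.det_vandermonde v, Matrix.det_apply]
    refine Finset.sum_congr rfl fun σ _ => ?_
    simp [Matrix.vandermonde_apply, Units.smul_def, zsmul_eq_mul]
  rw [h1, ← Finset.prod_mul_distrib]
  refine Finset.prod_congr rfl fun i _ => ?_
  rw [← Finset.prod_mul_distrib]
  exact Finset.prod_congr rfl fun _ _ => by ring

/-- Lemma 5.4 of the paper: for an antisymmetric polynomial
`Λ = g * ∏_{i<j}(t_i - t_j)` (with `g` symmetric), and any `e ≥ d`, the coefficient of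
`∏_j t_j^{e-j}` in `Λ * ∏_{i<j}(t_i + t_j)` equals the coefficient of the same monomial
in `Λ * ∏_j t_j^{j-1}`. -/
theorem stmt_1 {R : Type*} [CommRing R] (d : ℕ) (hd : 1 ≤ d)
    (g : MvPolynomial (Fin d) R)
    (hg : ∀ σ : Equiv.Perm (Fin d), MvPolynomial.rename σ g = g)
    (e : ℕ) (he : d ≤ e) :
    MvPolynomial.coeff
      (Finsupp.equivFunOnFinite.symm fun j : Fin d => e - ((j : ℕ) + 1))
      ((g * ∏ i : Fin d, ∏ j ∈ Finset.Ioi i,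
          (MvPolynomial.X i - MvPolynomial.X j)) *
        ∏ i : Fin d, ∏ j ∈ Finset.Ioi i, (MvPolynomial.X i + MvPolynomial.X j))
    = MvPolynomial.coeff
      (Finsupp.equivFunOnFinite.symm fun j : Fin d => e - ((j : ℕ) + 1))
      ((g * ∏ i : Fin d, ∏ j ∈ Finset.Ioi i,
          (MvPolynomial.X i - MvPolynomial.X j)) *
        ∏ j : Fin d, MvPolynomial.X j ^ (j : ℕ)) := by
  classical
  set μ : Fin d →₀ ℕ := Finsupp.equivFunOnFinite.symm fun j : Fin d => e - ((j : ℕ) + 1)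
    with hμ
  have hμk : ∀ k : Fin d, μ k = e - ((k : ℕ) + 1) := fun k => rfl
  -- the constant sign
  set r : R := ∏ i : Fin d, ∏ j ∈ Finset.Ioi i, (-1 : R) with hr
  have hc : (∏ i : Fin d, ∏ j ∈ Finset.Ioi i, (-1 : MvPolynomial (Fin d) R)) = C r := by
    rw [hr, map_prod]
    refine Finset.prod_congr rfl fun i _ => ?_
    rw [map_prod]
    simp
  -- monomial exponent families
  set F2 : Equiv.Perm (Fin d) → (Fin d →₀ ℕ) := fun σ =>
    Finsupp.equivFunOnFinite.symm fun k => 2 * ((σ⁻¹ k : Fin d) : ℕ) with hF2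
  set F1 : Equiv.Perm (Fin d) → (Fin d →₀ ℕ) := fun σ =>
    Finsupp.equivFunOnFinite.symm fun k => ((σ⁻¹ k : Fin d) : ℕ) + (k : ℕ) with hF1
  -- rewrite LHS product
  have hL : (g * ∏ i : Fin d, ∏ j ∈ Finset.Ioi i, (X i - X j : MvPolynomial (Fin d) R)) *
      ∏ i : Fin d, ∏ j ∈ Finset.Ioi i, (X i + X j : MvPolynomial (Fin d) R)
      = C r * (g * ∑ σ : Equiv.Perm (Fin d),
          ((Equiv.Perm.sign σ : ℤ) : MvPolynomial (Fin d) R) * monomial (F2 σ) 1) := by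
    have hVP : (∏ i : Fin d, ∏ j ∈ Finset.Ioi i, (X i - X j : MvPolynomial (Fin d) R)) *
        (∏ i : Fin d, ∏ j ∈ Finset.Ioi i, (X i + X j : MvPolynomial (Fin d) R)) =
        ∏ i : Fin d, ∏ j ∈ Finset.Ioi i,
          ((fun k : Fin d => (X k : MvPolynomial (Fin d) R) ^ 2) i - (fun k : Fin d => (X k : MvPolynomial (Fin d) R) ^ 2) j) := by
      rw [← Finset.prod_mul_distrib]
      refine Finset.prod_congr rfl fun i _ => ?_
      rw [← Finset.prod_mul_distrib]
      exact Finset.prod_congr rfl fun j _ => by ring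
    rw [mul_assoc, hVP, prod_sub_eq, hc]
    rw [mul_left_comm]
    congr 2
    refine Finset.sum_congr rfl fun σ _ => ?_
    congr 1
    calc ∏ i : Fin d, ((X (σ i) : MvPolynomial (Fin d) R) ^ 2) ^ (i : ℕ)
        = ∏ i : Fin d, (monomial (Finsupp.single (σ i) (2 * (i : ℕ))) (1 : R)) := by
          refine Finset.prod_congr rfl fun i _ => ?_
          rw [← pow_mul, X_pow_eq_monomial]
      _ = monomial (∑ i : Fin d, Finsupp.single (σ i) (2 * (i : ℕ))) 1 :=
          prod_monomial_one _ _
      _ = monomial (F2 σ) 1 := by rw [sum_single_comp σ (fun i => 2 * (i : ℕ))]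
  -- rewrite RHS product
  have hR : (g * ∏ i : Fin d, ∏ j ∈ Finset.Ioi i, (X i - X j : MvPolynomial (Fin d) R)) *
      ∏ j : Fin d, (X j : MvPolynomial (Fin d) R) ^ (j : ℕ)
      = C r * (g * ∑ σ : Equiv.Perm (Fin d),
          ((Equiv.Perm.sign σ : ℤ) : MvPolynomial (Fin d) R) * monomial (F1 σ) 1) := by
    rw [prod_sub_eq (fun i : Fin d => (X i : MvPolynomial (Fin d) R)), hc]
    rw [show ∀ a b c : MvPolynomial (Fin d) R, g * (a * b) * c = a * (g * (b * c)) from fun a b c => by ring]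
    congr 2
    rw [Finset.sum_mul]
    refine Finset.sum_congr rfl fun σ _ => ?_
    rw [mul_assoc]
    congr 1
    calc (∏ i : Fin d, (X (σ i) : MvPolynomial (Fin d) R) ^ (i : ℕ)) * ∏ j : Fin d, (X j : MvPolynomial (Fin d) R) ^ (j : ℕ)
        = (monomial (∑ i : Fin d, Finsupp.single (σ i) (i : ℕ)) (1 : R)) *
          (monomial (∑ j : Fin d, Finsupp.single j ((j : ℕ))) (1 : R)) := by
          rw [← prod_monomial_one, ← prod_monomial_one]
          simp [X_pow_eq_monomial]
      _ = monomial (F1 σ) 1 := by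
          rw [monomial_mul, one_mul, sum_single_comp σ (fun i => (i : ℕ)),
            sum_single_eq (fun j : Fin d => (j : ℕ))]
          have hadd : ((Finsupp.equivFunOnFinite.symm fun k => ((σ⁻¹ k : Fin d) : ℕ))
              + Finsupp.equivFunOnFinite.symm fun j : Fin d => (j : ℕ)) = F1 σ := by
            ext k
            simp [hF1]
          rw [hadd]
  rw [hL, hR, coeff_C_mul, coeff_C_mul]
  congr 1
  -- push coeff inside the sums
  have key : ∀ F : Equiv.Perm (Fin d) → (Fin d →₀ ℕ),
      coeff μ (g * ∑ σ : Equiv.Perm (Fin d),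
          ((Equiv.Perm.sign σ : ℤ) : MvPolynomial (Fin d) R) * monomial (F σ) 1)
      = ∑ σ : Equiv.Perm (Fin d), ((Equiv.Perm.sign σ : ℤ) : R) *
          (if F σ ≤ μ then coeff (μ - F σ) g else 0) := by
    intro F
    rw [Finset.mul_sum, coeff_sum]
    refine Finset.sum_congr rfl fun σ _ => ?_
    rw [mul_left_comm, ← map_intCast (C : R →+* MvPolynomial (Fin d) R), coeff_C_mul, coeff_mul_monomial']
    split_ifs <;> ring
  rw [key, key]
  -- symmetry of g on coefficients
  have hsym : ∀ (σ : Equiv.Perm (Fin d)) (m : Fin d → ℕ),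
      coeff (Finsupp.equivFunOnFinite.symm fun k => m (σ⁻¹ k)) g
        = coeff (Finsupp.equivFunOnFinite.symm m) g := by
    intro σ m
    have hmap : Finsupp.mapDomain (σ : Fin d → Fin d)
        (Finsupp.equivFunOnFinite.symm m)
        = Finsupp.equivFunOnFinite.symm fun k => m (σ⁻¹ k) := by
      ext k
      rw [Finsupp.mapDomain_equiv_apply]
      rfl
    conv_lhs => rw [← hmap, ← hg σ]
    exact coeff_rename_mapDomain _ σ.injective g _
  -- reindex the right-hand sum by σ ↦ σ⁻¹ and compare termwise
  refine Fintype.sum_equiv (Equiv.inv (Equiv.Perm (Fin d))) _ _ fun σ => ?_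
  simp only [Equiv.inv_apply]
  rw [Equiv.Perm.sign_inv]
  congr 1
  have hcond : (F2 σ ≤ μ) ↔ (F1 σ⁻¹ ≤ μ) := by
    rw [Finsupp.le_def, Finsupp.le_def]
    constructor
    · intro h k
      have h1 := h (σ k)
      have h2 : ((σ⁻¹ (σ k) : Fin d) : ℕ) = (k : ℕ) := by rw [perm_inv_apply_self]
      have h3 : (((σ⁻¹)⁻¹ k : Fin d) : ℕ) = ((σ k : Fin d) : ℕ) := by rw [inv_inv]
      have hk : (k : ℕ) < d := k.is_lt
      have hsk : ((σ k : Fin d) : ℕ) < d := (σ k).is_lt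
      simp only [hF2, hF1, Finsupp.equivFunOnFinite_symm_apply_apply, hμk, h2, h3] at h1 ⊢
      omega
    · intro h k
      have h1 := h (σ⁻¹ k)
      have h2 : ((σ (σ⁻¹ k) : Fin d) : ℕ) = (k : ℕ) := by rw [perm_apply_inv_self]
      have h3 : (((σ⁻¹)⁻¹ (σ⁻¹ k) : Fin d) : ℕ) = (k : ℕ) := by
        rw [inv_inv, perm_apply_inv_self]
      have hk : (k : ℕ) < d := k.is_lt
      have hsk : ((σ⁻¹ k : Fin d) : ℕ) < d := (σ⁻¹ k).is_lt
      simp only [hF2, hF1, Finsupp.equivFunOnFinite_symm_apply_apply, hμk, h2, h3] at h1 ⊢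
      omega
  refine if_congr hcond ?_ rfl
  -- value equality
  have hB : μ - F1 σ⁻¹ = Finsupp.equivFunOnFinite.symm
      (fun k : Fin d => (e - ((k : ℕ) + 1)) - (((σ k : Fin d) : ℕ) + (k : ℕ))) := by
    ext k
    rw [Finsupp.tsub_apply]
    simp only [hF1, hμk, Finsupp.equivFunOnFinite_symm_apply_apply, inv_inv]
  have hA : μ - F2 σ = Finsupp.equivFunOnFinite.symm
      (fun k : Fin d => (fun k : Fin d =>
        (e - ((k : ℕ) + 1)) - (((σ k : Fin d) : ℕ) + (k : ℕ))) (σ⁻¹ k)) := by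
    ext k
    rw [Finsupp.tsub_apply]
    simp only [hF2, hμk, Finsupp.equivFunOnFinite_symm_apply_apply,
      perm_apply_inv_self]
    have hk : (k : ℕ) < d := k.is_lt
    have hsk : ((σ⁻¹ k : Fin d) : ℕ) < d := (σ⁻¹ k).is_lt
    omega
  rw [hA, hB]
  exact hsym σ (fun k : Fin d => e - ((k : ℕ) + 1) - (((σ k : Fin d) : ℕ) + (k : ℕ)))
end

section
/- Let R be a commutative ring, n ≥ 1 and 1 ≤ d ≤ n − 1 integers. Let λ = (λ_1,…,λ_d) ∈ ℕ^d, let s : ℤ → R satisfy s(k) = 0 for all k < 0, and let N ∈ ℕ satisfy N ≥ λ_i + d − 1 for all i. Then the coefficient of the monomial ∏_{j=1}^{d} t_j^{N+n−j} in the polynomial det((t_j^{λ_i+d−i})_{1≤i,j≤d}) · ∏_{j=1}^{d} Ŝ_N(t_j) equals the determinant of the d×d matrix whose (i,j) entry is s(λ_i − (n − d) + j − i). -/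
private lemma coeff_C_mul_prod_X_pow {R : Type*} [CommRing R] {d : ℕ}
    (μ b : Fin d → ℕ) (c : R) :
    MvPolynomial.coeff (Finsupp.equivFunOnFinite.symm μ)
      (MvPolynomial.C c * ∏ i : Fin d, MvPolynomial.X i ^ b i)
    = if b = μ then c else 0 := by
  classical
  have h1 : (MvPolynomial.monomial (R := R) (Finsupp.equivFunOnFinite.symm b) c)
      = MvPolynomial.C c * ∏ i : Fin d, MvPolynomial.X i ^ b i := by
    rw [MvPolynomial.monomial_eq, Finsupp.prod_fintype]
    · simp
    · intro i; exact pow_zero _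
  rw [← h1, MvPolynomial.coeff_monomial]
  by_cases h : b = μ
  · rw [if_pos h, if_pos (by rw [h])]
  · rw [if_neg h, if_neg (fun hc => h (Finsupp.equivFunOnFinite.symm.injective hc))]

private lemma stmt5_aux {R : Type*} [CommRing R] {d n N : ℕ} (hd : d + 1 ≤ n)
    (s : ℤ → R) (hs : ∀ k : ℤ, k < 0 → s k = 0)
    (a : Fin d → ℕ) (haN : ∀ i, a i ≤ N) :
    MvPolynomial.coeff
      (Finsupp.equivFunOnFinite.symm fun j : Fin d => N + (n - ((j : ℕ) + 1)))
      ((∏ i : Fin d, MvPolynomial.X i ^ a i) *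
        ∏ j : Fin d, ∑ k ∈ Finset.range (N + 1),
          MvPolynomial.C (s k) * MvPolynomial.X j ^ (N - k))
    = ∏ i : Fin d, s ((a i : ℤ) + ((i : ℕ) : ℤ) + 1 - n) := by
  classical
  rw [← Finset.prod_mul_distrib]
  have h2 : ∀ i : Fin d,
      (MvPolynomial.X (R := R) i ^ a i) *
        ∑ k ∈ Finset.range (N + 1), MvPolynomial.C (s k) * MvPolynomial.X i ^ (N - k)
      = ∑ k ∈ Finset.range (N + 1),
          MvPolynomial.C (s k) * MvPolynomial.X i ^ (a i + (N - k)) := by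
    intro i
    rw [Finset.mul_sum]
    refine Finset.sum_congr rfl fun k _ => ?_
    rw [pow_add]; ring
  simp only [h2]
  rw [Finset.prod_univ_sum, MvPolynomial.coeff_sum]
  have h3 : ∀ g : Fin d → ℕ,
      (∏ i : Fin d, MvPolynomial.C (s (g i)) * MvPolynomial.X i ^ (a i + (N - g i)))
      = MvPolynomial.C (∏ i : Fin d, s (g i)) *
          ∏ i : Fin d, MvPolynomial.X i ^ (a i + (N - g i)) := by
    intro g; rw [Finset.prod_mul_distrib, map_prod]
  simp only [h3, coeff_C_mul_prod_X_pow]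
  by_cases hpos : ∀ i : Fin d, n ≤ a i + ((i : ℕ) + 1)
  · -- unique contributing tuple
    set g₀ : Fin d → ℕ := fun i => a i + ((i : ℕ) + 1) - n with hg₀
    have hg₀mem : g₀ ∈ Fintype.piFinset fun _ : Fin d => Finset.range (N + 1) := by
      simp only [Fintype.mem_piFinset, Finset.mem_range, hg₀]
      intro i
      have := haN i; have := hpos i
      omega
    rw [Finset.sum_eq_single_of_mem g₀ hg₀mem ?_]
    · rw [if_pos ?_]
      · refine Finset.prod_congr rfl fun i _ => ?_
        congr 1
        have h := hpos i
        have hi := i.isLt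
        simp only [hg₀]
        omega
      · funext i
        have := hpos i
        have := haN i
        have hi := i.isLt
        simp only [hg₀]
        omega
    · intro g hg hne
      rw [if_neg]
      intro hcond
      apply hne
      funext i
      have hgi : g i ≤ N := by
        simp only [Fintype.mem_piFinset, Finset.mem_range] at hg
        have := hg i; omega
      have hci := congrFun hcond i
      have := haN i; have := hpos i; have hi := i.isLt
      simp only [hg₀]
      omega
  · push_neg at hpos
    obtain ⟨i₀, hi₀⟩ := hpos
    rw [Finset.sum_eq_zero]
    · symm
      apply Finset.prod_eq_zero (Finset.mem_univ i₀)
      apply hs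
      have := i₀.isLt
      omega
    · intro g hg
      rw [if_neg]
      intro hcond
      have hgi : g i₀ ≤ N := by
        simp only [Fintype.mem_piFinset, Finset.mem_range] at hg
        have := hg i₀; omega
      have hci := congrFun hcond i₀
      have := haN i₀
      omega

/-- Algebraic core of Proposition 5.5 (type A Grassmann bundle): the coefficient of
`∏_j t_j^{N+n-j}` in `det(t_j^{λ_i+d-i}) ⬝ ∏_j Ŝ_N(t_j)` equals
`det(s(λ_i - (n-d) + j - i))`. -/
theorem stmt_5 {R : Type*} [CommRing R] (n d : ℕ) (hn : 1 ≤ n)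
    (hd1 : 1 ≤ d) (hd : d + 1 ≤ n)
    (lam : Fin d → ℕ) (s : ℤ → R) (hs : ∀ k : ℤ, k < 0 → s k = 0)
    (N : ℕ) (hN : ∀ i : Fin d, lam i + d - 1 ≤ N) :
    MvPolynomial.coeff
      (Finsupp.equivFunOnFinite.symm fun j : Fin d => N + (n - ((j : ℕ) + 1)))
      (Matrix.det (Matrix.of fun i j : Fin d =>
          MvPolynomial.X j ^ (lam i + (d - ((i : ℕ) + 1)))) *
        ∏ j : Fin d, ∑ k ∈ Finset.range (N + 1),
          MvPolynomial.C (s k) * MvPolynomial.X j ^ (N - k))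
    = Matrix.det (Matrix.of fun i j : Fin d =>
        s ((lam i : ℤ) - ((n : ℤ) - (d : ℤ)) + ((j : ℕ) : ℤ) - ((i : ℕ) : ℤ))) := by
  classical
  rw [Matrix.det_apply, Matrix.det_apply, Finset.sum_mul, MvPolynomial.coeff_sum]
  refine Finset.sum_congr rfl fun σ _ => ?_
  rw [Units.smul_def, Units.smul_def, smul_mul_assoc, MvPolynomial.coeff_smul]
  congr 1
  simp only [Matrix.of_apply]
  have haN : ∀ i : Fin d, lam (σ i) + (d - (((σ i) : ℕ) + 1)) ≤ N := by
    intro i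
    have h1 := hN (σ i)
    have h2 := (σ i).isLt
    omega
  rw [stmt5_aux hd s hs (fun i => lam (σ i) + (d - (((σ i) : ℕ) + 1))) haN]
  refine Finset.prod_congr rfl fun i _ => ?_
  congr 1
  have h2 := (σ i).isLt
  have h3 := i.isLt
  omega
end

section
/- Let R be a commutative ring, n ≥ 1 and 1 ≤ d ≤ n integers. Let λ = (λ_1,…,λ_d) ∈ ℕ^d, let s : ℤ → R satisfy s(k) = 0 for all k < 0, and let N ∈ ℕ satisfy N ≥ λ_i + 2d for all i. Then the coefficient of the monomial ∏_{j=1}^{d} t_j^{N+2n−j} in the polynomial det((t_j^{λ_i+d−i})_{1≤i,j≤d}) · ∏_{1≤i<j≤d}(t_i + t_j) · ∏_{j=1}^{d} Ŝ_N(t_j) equals the determinant of the d×d matrix whose (i,j) entry is s(λ_i − (2n − d + 1 − i) + 2(j − i)). -/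
open MvPolynomial Finset



section PhiAux
variable {R : Type*} [CommRing R] {d : ℕ}

noncomputable def phiF (w : (Fin d →₀ ℕ) → R) (P : MvPolynomial (Fin d) R) : R :=
  ∑ u ∈ P.support, MvPolynomial.coeff u P * w u

lemma phiF_superset (w : (Fin d →₀ ℕ) → R) (P : MvPolynomial (Fin d) R)
    {B : Finset (Fin d →₀ ℕ)} (h : P.support ⊆ B) :
    phiF w P = ∑ u ∈ B, MvPolynomial.coeff u P * w u := by
  refine Finset.sum_subset h ?_
  intro u _ hu
  rw [MvPolynomial.notMem_support_iff.mp hu, zero_mul]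

lemma phiF_sum (w : (Fin d →₀ ℕ) → R) {ι : Type*} (s : Finset ι)
    (f : ι → MvPolynomial (Fin d) R) :
    phiF w (∑ x ∈ s, f x) = ∑ x ∈ s, phiF w (f x) := by
  classical
  have hB : ∀ x ∈ s, (f x).support ⊆ (s.biUnion fun x => (f x).support) := fun x hx =>
    Finset.subset_biUnion_of_mem (fun x => (f x).support) hx
  rw [phiF_superset w _ (MvPolynomial.support_sum)]
  · rw [Finset.sum_congr rfl (fun u _ => by rw [MvPolynomial.coeff_sum]),
      Finset.sum_congr rfl (fun u _ => Finset.sum_mul ..), Finset.sum_comm]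
    exact Finset.sum_congr rfl fun x hx => (phiF_superset w (f x) (hB x hx)).symm

lemma phiF_C_mul (w : (Fin d →₀ ℕ) → R) (r : R) (P : MvPolynomial (Fin d) R) :
    phiF w (MvPolynomial.C r * P) = r * phiF w P := by
  have hsub : (MvPolynomial.C r * P).support ⊆ P.support := by
    rw [← MvPolynomial.smul_eq_C_mul]
    exact Finsupp.support_smul
  rw [phiF_superset w _ hsub, phiF, Finset.mul_sum]
  exact Finset.sum_congr rfl fun u _ => by rw [MvPolynomial.coeff_C_mul]; ring

lemma phiF_monomial (w : (Fin d →₀ ℕ) → R) (m : Fin d →₀ ℕ) (r : R) :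
    phiF w (MvPolynomial.monomial m r) = r * w m := by
  rw [phiF_superset w _ (MvPolynomial.support_monomial_subset), Finset.sum_singleton,
    MvPolynomial.coeff_monomial, if_pos rfl]

lemma phiF_monomial_mul (w : (Fin d →₀ ℕ) → R) (m : Fin d →₀ ℕ)
    (P : MvPolynomial (Fin d) R) :
    phiF w (MvPolynomial.monomial m 1 * P) = phiF (fun u => w (m + u)) P := by
  classical
  have hsub : (MvPolynomial.monomial m 1 * P).support ⊆ P.support.image (m + ·) := by
    refine (MvPolynomial.support_mul _ _).trans ?_
    intro u hu
    rw [Finset.mem_add] at hu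
    obtain ⟨x, hx, y, hy, rfl⟩ := hu
    have := MvPolynomial.support_monomial_subset hx
    rw [Finset.mem_singleton] at this
    subst this
    exact Finset.mem_image_of_mem _ hy
  rw [phiF_superset w _ hsub,
    Finset.sum_image (fun a _ b _ h => by exact add_left_cancel h)]
  exact Finset.sum_congr rfl fun u _ => by rw [MvPolynomial.coeff_monomial_mul, one_mul]

end PhiAux



section CoreAux
variable {R : Type*} [CommRing R] {d : ℕ}



lemma phiF_eq_zero_of_antisym (G : (Fin d →₀ ℕ) → R)
    (hG0 : ∀ u : Fin d →₀ ℕ, ¬ Function.Injective ⇑u → G u = 0)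
    (hGperm : ∀ (π : Equiv.Perm (Fin d)) (u : Fin d →₀ ℕ),
      G (Finsupp.equivMapDomain (π : Fin d ≃ Fin d) u) = ((Equiv.Perm.sign π : ℤ) : R) * G u)
    (A : MvPolynomial (Fin d) R)
    (hA : ∀ v : Fin d →₀ ℕ,
      ∑ τ : Equiv.Perm (Fin d), ((Equiv.Perm.sign τ : ℤ) : R) *
        MvPolynomial.coeff (Finsupp.equivMapDomain (τ : Fin d ≃ Fin d) v) A = 0) :
    phiF G A = 0 := by
  classical
  set S : Finset (Fin d →₀ ℕ) :=
    (Finset.univ ×ˢ A.support).image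
      (fun p : Equiv.Perm (Fin d) × (Fin d →₀ ℕ) =>
        Finsupp.equivMapDomain (p.1 : Fin d ≃ Fin d) p.2) with hS
  have hmemS : ∀ u : Fin d →₀ ℕ, u ∈ S ↔
      ∃ π : Equiv.Perm (Fin d), ∃ w ∈ A.support,
        u = Finsupp.equivMapDomain (π : Fin d ≃ Fin d) w := by
    intro u
    simp only [hS, Finset.mem_image, Finset.mem_product, Finset.mem_univ, true_and, Prod.exists]
    constructor
    · rintro ⟨π, w, hw, rfl⟩; exact ⟨π, w, hw, rfl⟩
    · rintro ⟨π, w, hw, rfl⟩; exact ⟨π, w, hw, rfl⟩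
  have hSsub : A.support ⊆ S := by
    intro u hu
    refine (hmemS u).mpr ⟨1, u, hu, ?_⟩
    ext x
    simp [Finsupp.equivMapDomain_apply]; rfl
  have hSclosed : ∀ (π : Equiv.Perm (Fin d)) (u : Fin d →₀ ℕ), u ∈ S →
      Finsupp.equivMapDomain (π : Fin d ≃ Fin d) u ∈ S := by
    intro π u hu
    obtain ⟨ρ, w, hw, rfl⟩ := (hmemS u).mp hu
    refine (hmemS _).mpr ⟨π * ρ, w, hw, ?_⟩
    rw [Equiv.Perm.mul_def, ← Finsupp.equivMapDomain_trans]
  set r : (Fin d →₀ ℕ) → (Fin d →₀ ℕ) :=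
    fun u => Finsupp.equivMapDomain (((Tuple.sort ⇑u)⁻¹ : Equiv.Perm (Fin d)) : Fin d ≃ Fin d) u
    with hr
  have hcoe : ∀ (π : Equiv.Perm (Fin d)) (u : Fin d →₀ ℕ),
      ⇑(Finsupp.equivMapDomain (π : Fin d ≃ Fin d) u) = ⇑u ∘ ⇑π⁻¹ := by
    intro π u; funext x
    simp [Finsupp.equivMapDomain_apply, Equiv.Perm.inv_def]
  have hrcoe : ∀ u : Fin d →₀ ℕ, ⇑(r u) = ⇑u ∘ ⇑(Tuple.sort ⇑u) := by
    intro u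
    rw [hr]; rw [hcoe]; simp
  have hrecover : ∀ u : Fin d →₀ ℕ,
      Finsupp.equivMapDomain ((Tuple.sort ⇑u : Equiv.Perm (Fin d)) : Fin d ≃ Fin d) (r u)
        = u := by
    intro u
    rw [hr, ← Finsupp.equivMapDomain_trans]
    have : (((Tuple.sort ⇑u)⁻¹ : Equiv.Perm (Fin d)) : Fin d ≃ Fin d).trans
        (Tuple.sort ⇑u : Fin d ≃ Fin d) = Equiv.refl (Fin d) := by
      ext x; simp
    rw [this, Finsupp.equivMapDomain_refl]
  rw [phiF_superset G A hSsub]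
  rw [← Finset.sum_fiberwise_of_maps_to
    (g := r) (t := S.image r) (fun u hu => Finset.mem_image_of_mem r hu)]
  refine Finset.sum_eq_zero ?_
  intro v hv
  obtain ⟨u₀, hu₀S, hu₀⟩ := Finset.mem_image.mp hv
  have hvmono : Monotone ⇑v := by
    rw [← hu₀, hrcoe]
    exact Tuple.monotone_sort _
  by_cases hvinj : Function.Injective ⇑v
  · have hvS : v ∈ S := by rw [← hu₀, hr]; exact hSclosed _ _ hu₀S
    have hfib : S.filter (fun u => r u = v) = Finset.univ.image
        (fun π : Equiv.Perm (Fin d) => Finsupp.equivMapDomain (π : Fin d ≃ Fin d) v) := by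
      ext u
      simp only [Finset.mem_filter, Finset.mem_image, Finset.mem_univ, true_and]
      constructor
      · rintro ⟨huS, hru⟩
        exact ⟨Tuple.sort ⇑u, by rw [← hru]; exact hrecover u⟩
      · rintro ⟨π, rfl⟩
        refine ⟨hSclosed π v hvS, ?_⟩
        apply DFunLike.coe_injective
        show ⇑(r (Finsupp.equivMapDomain (π : Fin d ≃ Fin d) v)) = ⇑v
        rw [hrcoe, hcoe]
        have := Tuple.comp_perm_comp_sort_eq_comp_sort (σ := π⁻¹) (f := ⇑v)
        rw [this, Tuple.sort_eq_refl_iff_monotone.mpr hvmono]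
        funext x; simp
    have himg : ∀ π ∈ (Finset.univ : Finset (Equiv.Perm (Fin d))),
        ∀ π' ∈ (Finset.univ : Finset (Equiv.Perm (Fin d))),
        Finsupp.equivMapDomain (π : Fin d ≃ Fin d) v
          = Finsupp.equivMapDomain (π' : Fin d ≃ Fin d) v → π = π' := by
      intro π _ π' _ h
      have h2 : ⇑v ∘ ⇑π⁻¹ = ⇑v ∘ ⇑π'⁻¹ := by rw [← hcoe, ← hcoe, h]
      have h3 : ⇑π⁻¹ = ⇑π'⁻¹ := by
        funext x
        exact hvinj (congrFun h2 x)
      have h4 : π⁻¹ = π'⁻¹ := Equiv.Perm.ext fun x => congrFun h3 x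
      exact inv_injective h4
    rw [hfib, Finset.sum_image himg]
    have : ∀ π : Equiv.Perm (Fin d),
        MvPolynomial.coeff (Finsupp.equivMapDomain (π : Fin d ≃ Fin d) v) A *
          G (Finsupp.equivMapDomain (π : Fin d ≃ Fin d) v)
        = (((Equiv.Perm.sign π : ℤ) : R) *
            MvPolynomial.coeff (Finsupp.equivMapDomain (π : Fin d ≃ Fin d) v) A) * G v := by
      intro π; rw [hGperm]; ring
    rw [Finset.sum_congr rfl fun π _ => this π, ← Finset.sum_mul, hA v, zero_mul]
  · refine Finset.sum_eq_zero fun u hu => ?_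
    have hnu : ¬ Function.Injective ⇑u := by
      intro hInj
      apply hvinj
      rw [← (Finset.mem_filter.mp hu).2, hrcoe]
      exact hInj.comp (Equiv.injective _)
    rw [hG0 u hnu, mul_zero]

end CoreAux



section SymAux
variable {R : Type*} [CommRing R] {d : ℕ}

lemma pairProd_perm_invariant (τ : Equiv.Perm (Fin d)) :
    (∏ i : Fin d, ∏ j ∈ Finset.Ioi i, (X (τ i) + X (τ j) : MvPolynomial (Fin d) R))
      = ∏ i : Fin d, ∏ j ∈ Finset.Ioi i, (X i + X j) := by
  classical
  rw [Finset.prod_sigma' (Finset.univ) (fun i => Finset.Ioi i)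
    (fun i j => (X (τ i) + X (τ j) : MvPolynomial (Fin d) R)),
    Finset.prod_sigma' (Finset.univ) (fun i => Finset.Ioi i)
    (fun i j => (X i + X j : MvPolynomial (Fin d) R))]
  refine Finset.prod_nbij'
    (fun p => if τ p.1 < τ p.2 then ⟨τ p.1, τ p.2⟩ else ⟨τ p.2, τ p.1⟩)
    (fun p => if τ⁻¹ p.1 < τ⁻¹ p.2 then ⟨τ⁻¹ p.1, τ⁻¹ p.2⟩ else ⟨τ⁻¹ p.2, τ⁻¹ p.1⟩)
    ?_ ?_ ?_ ?_ ?_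
  · rintro ⟨i, j⟩ hp
    simp only [Finset.mem_sigma, Finset.mem_univ, Finset.mem_Ioi, true_and] at hp ⊢
    split_ifs with h
    · exact h
    · rcases lt_or_gt_of_ne (fun hc : τ i = τ j => (ne_of_lt hp) (τ.injective hc)) with h1 | h1
      · exact absurd h1 h
      · exact h1
  · rintro ⟨i, j⟩ hp
    simp only [Finset.mem_sigma, Finset.mem_univ, Finset.mem_Ioi, true_and] at hp ⊢
    split_ifs with h
    · exact h
    · rcases lt_or_gt_of_ne
        (fun hc : τ⁻¹ i = τ⁻¹ j => (ne_of_lt hp) (τ⁻¹.injective hc)) with h1 | h1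
      · exact absurd h1 h
      · exact h1
  · rintro ⟨i, j⟩ hp
    simp only [Finset.mem_sigma, Finset.mem_univ, Finset.mem_Ioi, true_and] at hp
    dsimp only
    have hne : τ i ≠ τ j := fun hc => (ne_of_lt hp) (τ.injective hc)
    rcases lt_or_gt_of_ne hne with h1 | h1
    · rw [if_pos h1]
      dsimp only
      rw [Equiv.Perm.inv_def, Equiv.symm_apply_apply, Equiv.symm_apply_apply, if_pos hp]
    · rw [if_neg (asymm h1)]
      dsimp only
      rw [Equiv.Perm.inv_def, Equiv.symm_apply_apply, Equiv.symm_apply_apply, if_neg (asymm hp)]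
  · rintro ⟨i, j⟩ hp
    simp only [Finset.mem_sigma, Finset.mem_univ, Finset.mem_Ioi, true_and] at hp
    dsimp only
    have hne : τ⁻¹ i ≠ τ⁻¹ j := fun hc => (ne_of_lt hp) (τ⁻¹.injective hc)
    rcases lt_or_gt_of_ne hne with h1 | h1
    · rw [if_pos h1]
      dsimp only
      rw [Equiv.Perm.inv_def, Equiv.apply_symm_apply, Equiv.apply_symm_apply, if_pos hp]
    · rw [if_neg (asymm h1)]
      dsimp only
      rw [Equiv.Perm.inv_def, Equiv.apply_symm_apply, Equiv.apply_symm_apply, if_neg (asymm hp)]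
  · rintro ⟨i, j⟩ hp
    dsimp only
    split_ifs with h
    · rfl
    · exact add_comm _ _

lemma rename_pairProd (τ : Equiv.Perm (Fin d)) :
    MvPolynomial.rename (⇑τ) (∏ i : Fin d, ∏ j ∈ Finset.Ioi i,
        (X i + X j : MvPolynomial (Fin d) R))
      = ∏ i : Fin d, ∏ j ∈ Finset.Ioi i, (X i + X j) := by
  rw [map_prod]
  rw [Finset.prod_congr rfl fun i _ => map_prod (MvPolynomial.rename (R := R) ⇑τ) _ _]
  simp only [map_add, rename_X]
  exact pairProd_perm_invariant τ

end SymAux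



section VandAux
variable {R : Type*} [CommRing R] {d : ℕ}

lemma prod_X_pow_univ (u : Fin d →₀ ℕ) :
    (∏ j : Fin d, (X j : MvPolynomial (Fin d) R) ^ u j) = monomial u 1 := by
  rw [← MvPolynomial.prod_X_pow_eq_monomial]
  exact (Finset.prod_subset (Finset.subset_univ _) fun x _ hx => by
    rw [Finsupp.notMem_support_iff.mp hx, pow_zero]).symm

lemma antisym_monomial (g : Fin d → ℕ) :
    (∑ τ : Equiv.Perm (Fin d), ((Equiv.Perm.sign τ : ℤ) : MvPolynomial (Fin d) R) *
      MvPolynomial.rename ⇑τ (monomial (Finsupp.equivFunOnFinite.symm g) (1:R)))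
    = Matrix.det (Matrix.of fun i j : Fin d => (X j : MvPolynomial (Fin d) R) ^ g i) := by
  have key : ∀ τ : Equiv.Perm (Fin d),
      MvPolynomial.rename ⇑τ (monomial (Finsupp.equivFunOnFinite.symm g) (1:R))
        = monomial (Finsupp.equivFunOnFinite.symm (g ∘ ⇑τ⁻¹)) (1:R) := by
    intro τ
    rw [MvPolynomial.rename_monomial, ← Finsupp.equivMapDomain_eq_mapDomain]
    have hu : Finsupp.equivMapDomain (τ : Fin d ≃ Fin d) (Finsupp.equivFunOnFinite.symm g)
        = Finsupp.equivFunOnFinite.symm (g ∘ ⇑τ⁻¹) := by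
      ext x
      rw [Finsupp.equivMapDomain_apply]
      simp [Equiv.Perm.inv_def]
    rw [hu]
  rw [Matrix.det_apply']
  have key2 : ∀ τ : Equiv.Perm (Fin d),
      (∏ i : Fin d, (Matrix.of fun i j : Fin d =>
          (X j : MvPolynomial (Fin d) R) ^ g i) (τ i) i)
        = monomial (Finsupp.equivFunOnFinite.symm (g ∘ ⇑τ)) (1:R) := by
    intro τ
    rw [← prod_X_pow_univ (Finsupp.equivFunOnFinite.symm (g ∘ ⇑τ))]
    exact Finset.prod_congr rfl fun i _ => by simp [Matrix.of_apply]
  calc (∑ τ : Equiv.Perm (Fin d), ((Equiv.Perm.sign τ : ℤ) : MvPolynomial (Fin d) R) *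
          MvPolynomial.rename ⇑τ (monomial (Finsupp.equivFunOnFinite.symm g) (1:R)))
      = ∑ τ : Equiv.Perm (Fin d), ((Equiv.Perm.sign τ⁻¹ : ℤ) : MvPolynomial (Fin d) R) *
          monomial (Finsupp.equivFunOnFinite.symm (g ∘ ⇑τ⁻¹)) (1:R) := by
        refine Finset.sum_congr rfl fun τ _ => ?_
        rw [key τ, Equiv.Perm.sign_inv]
    _ = ∑ τ : Equiv.Perm (Fin d), ((Equiv.Perm.sign τ : ℤ) : MvPolynomial (Fin d) R) *
          monomial (Finsupp.equivFunOnFinite.symm (g ∘ ⇑τ)) (1:R) :=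
        Equiv.sum_comp (Equiv.inv (Equiv.Perm (Fin d)))
          (fun τ => ((Equiv.Perm.sign τ : ℤ) : MvPolynomial (Fin d) R) *
            monomial (Finsupp.equivFunOnFinite.symm (g ∘ ⇑τ)) (1:R))
    _ = _ := by
        refine Finset.sum_congr rfl fun τ _ => ?_
        rw [key2 τ]

lemma vand_id :
    (∏ i : Fin d, ∏ j ∈ Finset.Ioi i, (X i + X j : MvPolynomial (Fin d) R)) *
      Matrix.det (Matrix.of fun i j : Fin d => (X j : MvPolynomial (Fin d) R) ^ (i:ℕ))
    = Matrix.det (Matrix.of fun i j : Fin d =>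
        (X j : MvPolynomial (Fin d) R) ^ (2*(i:ℕ))) := by
  have h1 : (Matrix.of fun i j : Fin d => (X j : MvPolynomial (Fin d) R) ^ (i:ℕ))
      = (Matrix.vandermonde fun j : Fin d => (X j : MvPolynomial (Fin d) R)).transpose := by
    ext i j; simp [Matrix.vandermonde]
  have h2 : (Matrix.of fun i j : Fin d => (X j : MvPolynomial (Fin d) R) ^ (2*(i:ℕ)))
      = (Matrix.vandermonde fun j : Fin d =>
          ((X j : MvPolynomial (Fin d) R) ^ 2)).transpose := by
    ext i j; simp [Matrix.vandermonde, ← pow_mul]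
  rw [h1, h2, Matrix.det_transpose, Matrix.det_transpose, Matrix.det_vandermonde,
    Matrix.det_vandermonde, ← Finset.prod_mul_distrib]
  refine Finset.prod_congr rfl fun i _ => ?_
  rw [← Finset.prod_mul_distrib]
  refine Finset.prod_congr rfl fun j _ => ?_
  ring

end VandAux



section SAux
variable {R : Type*} [CommRing R] {d : ℕ}

lemma monomial_prod {ι : Type*} (t : Finset ι) (m : ι → (Fin d →₀ ℕ)) (c : ι → R) :
    ∏ x ∈ t, monomial (m x) (c x) = monomial (∑ x ∈ t, m x) (∏ x ∈ t, c x) := by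
  classical
  induction t using Finset.cons_induction_on with
  | empty => simp [MvPolynomial.monomial_zero']
  | cons _ _ h ih =>
    rw [Finset.prod_cons, Finset.sum_cons, Finset.prod_cons, ih,
      MvPolynomial.monomial_mul]

lemma sum_single_univ (f : Fin d → ℕ) :
    (∑ j : Fin d, Finsupp.single j (f j)) = Finsupp.equivFunOnFinite.symm f := by
  ext x
  rw [Finsupp.finset_sum_apply]
  simp [Finsupp.single_apply]

lemma SCoeff (s : ℤ → R) (hs : ∀ k : ℤ, k < 0 → s k = 0) (N : ℕ) (v : Fin d →₀ ℕ) :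
    MvPolynomial.coeff v (∏ j : Fin d, ∑ k ∈ Finset.range (N + 1),
        MvPolynomial.C (s k) * MvPolynomial.X j ^ (N - k))
      = ∏ j : Fin d, s ((N : ℤ) - (v j : ℤ)) := by
  classical
  have hfac : ∀ j : Fin d, (∑ k ∈ Finset.range (N + 1),
      MvPolynomial.C (s k) * MvPolynomial.X j ^ (N - k))
      = ∑ k ∈ Finset.range (N + 1), monomial (Finsupp.single j (N - k)) (s k) := by
    intro j
    exact Finset.sum_congr rfl fun k _ => MvPolynomial.C_mul_X_pow_eq_monomial
  rw [Finset.prod_congr rfl fun j _ => hfac j]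
  rw [Finset.prod_univ_sum]
  rw [MvPolynomial.coeff_sum]
  have hterm : ∀ g : Fin d → ℕ,
      MvPolynomial.coeff v (∏ j : Fin d, monomial (Finsupp.single j (N - g j)) (s (g j)))
      = if (Finsupp.equivFunOnFinite.symm fun j => N - g j) = v
          then ∏ j : Fin d, s (g j) else 0 := by
    intro g
    rw [monomial_prod, sum_single_univ, MvPolynomial.coeff_monomial]
  rw [Finset.sum_congr rfl fun g _ => hterm g]
  by_cases hv : ∀ j : Fin d, v j ≤ N
  · rw [Finset.sum_eq_single (fun j : Fin d => N - v j)]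
    · rw [if_pos]
      · refine Finset.prod_congr rfl fun j _ => ?_
        congr 1
        dsimp only
        have := hv j
        omega
      · ext x
        simp only [Finsupp.coe_equivFunOnFinite_symm]
        have := hv x
        omega
    · intro g hg hne
      rw [if_neg]
      intro hc
      apply hne
      funext j
      have hgj : g j < N + 1 := by
        have := Fintype.mem_piFinset.mp hg j
        simpa using this
      have : N - g j = v j := by
        have := DFunLike.congr_fun hc j
        simpa using this
      omega
    · intro hmem
      exfalso
      apply hmem
      rw [Fintype.mem_piFinset]
      intro j
      simp only [Finset.mem_range]
      omega
  · push_neg at hv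
    obtain ⟨j₀, hj₀⟩ := hv
    rw [Finset.sum_eq_zero, Finset.prod_eq_zero (Finset.mem_univ j₀)]
    · apply hs
      push_cast
      omega
    · intro g hg
      rw [if_neg]
      intro hc
      have hgj : g j₀ < N + 1 := by
        have := Fintype.mem_piFinset.mp hg j₀
        simpa using this
      have : N - g j₀ = v j₀ := by
        have := DFunLike.congr_fun hc j₀
        simpa using this
      omega

end SAux



section DegAux
variable {R : Type*} [CommRing R] {d : ℕ}

lemma prod_X_pow_univ' (u : Fin d →₀ ℕ) :
    (∏ j : Fin d, (X j : MvPolynomial (Fin d) R) ^ u j) = monomial u 1 := by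
  rw [← MvPolynomial.prod_X_pow_eq_monomial]
  exact (Finset.prod_subset (Finset.subset_univ _) fun x _ hx => by
    rw [Finsupp.notMem_support_iff.mp hx, pow_zero]).symm

lemma detExpand (a : Fin d → ℕ) :
    Matrix.det (Matrix.of fun i j : Fin d => (X j : MvPolynomial (Fin d) R) ^ a i)
    = ∑ τ : Equiv.Perm (Fin d), MvPolynomial.C ((Equiv.Perm.sign τ : ℤ) : R) *
       (monomial (Finsupp.equivFunOnFinite.symm (a ∘ ⇑τ)) (1:R)) := by
  rw [Matrix.det_apply']
  refine Finset.sum_congr rfl fun τ _ => ?_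
  have hmon : (∏ i : Fin d,
      (Matrix.of fun i j : Fin d => (X j : MvPolynomial (Fin d) R) ^ a i) (τ i) i)
      = monomial (Finsupp.equivFunOnFinite.symm (a ∘ ⇑τ)) (1:R) := by
    rw [← prod_X_pow_univ' (Finsupp.equivFunOnFinite.symm (a ∘ ⇑τ))]
    exact Finset.prod_congr rfl fun i _ => by simp
  rw [hmon]
  rw [show ((Equiv.Perm.sign τ : ℤ) : MvPolynomial (Fin d) R)
      = MvPolynomial.C ((Equiv.Perm.sign τ : ℤ) : R) from
    (map_intCast (MvPolynomial.C : R →+* MvPolynomial (Fin d) R) _).symm]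

lemma degreeOf_X_le' (i j : Fin d) :
    MvPolynomial.degreeOf j (X i : MvPolynomial (Fin d) R) ≤ if i = j then 1 else 0 := by
  rw [MvPolynomial.degreeOf_eq_sup]
  refine Finset.sup_le fun m hm => ?_
  have hXi : (X i : MvPolynomial (Fin d) R) = monomial (Finsupp.single i 1) 1 := by
    rw [← MvPolynomial.C_mul_X_eq_monomial, MvPolynomial.C_1, one_mul]
  rw [hXi] at hm
  have := MvPolynomial.support_monomial_subset hm
  rw [Finset.mem_singleton] at this
  subst this
  rw [Finsupp.single_apply]

lemma piSuppBound {u : Fin d →₀ ℕ}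
    (hu : u ∈ (∏ i : Fin d, ∏ j ∈ Finset.Ioi i,
      (X i + X j : MvPolynomial (Fin d) R)).support) :
    ∀ j : Fin d, u j ≤ d - 1 := by
  intro j
  have h1 : u j ≤ MvPolynomial.degreeOf j (∏ i : Fin d, ∏ k ∈ Finset.Ioi i,
      (X i + X k : MvPolynomial (Fin d) R)) := by
    rw [MvPolynomial.degreeOf_eq_sup]
    exact Finset.le_sup (f := fun m => m j) hu
  have h2 : MvPolynomial.degreeOf j (∏ i : Fin d, ∏ k ∈ Finset.Ioi i,
      (X i + X k : MvPolynomial (Fin d) R))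
      ≤ ∑ i : Fin d, ∑ k ∈ Finset.Ioi i,
          ((if i = j then 1 else 0) + (if k = j then 1 else 0)) := by
    refine (MvPolynomial.degreeOf_prod_le j Finset.univ _).trans ?_
    refine Finset.sum_le_sum fun i _ => ?_
    refine (MvPolynomial.degreeOf_prod_le j (Finset.Ioi i) _).trans ?_
    refine Finset.sum_le_sum fun k _ => ?_
    exact (MvPolynomial.degreeOf_add_le j _ _).trans
      (max_le ((degreeOf_X_le' i j).trans (Nat.le_add_right _ _))
        ((degreeOf_X_le' k j).trans (Nat.le_add_left _ _)))
  have h3 : (∑ i : Fin d, ∑ k ∈ Finset.Ioi i,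
      ((if i = j then 1 else 0) + (if k = j then 1 else 0))) = (d - 1 - (j:ℕ)) + j := by
    have hsplit : ∀ i : Fin d, (∑ k ∈ Finset.Ioi i,
        ((if i = j then 1 else 0) + (if k = j then 1 else 0)))
        = (if i = j then (Finset.Ioi i).card else 0) + (if j ∈ Finset.Ioi i then 1 else 0) := by
      intro i
      rw [Finset.sum_add_distrib, Finset.sum_const, Finset.sum_ite_eq' (Finset.Ioi i) j
        (fun _ => 1)]
      congr 1
      split_ifs <;> simp
    rw [Finset.sum_congr rfl fun i _ => hsplit i, Finset.sum_add_distrib,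
      Finset.sum_ite_eq' Finset.univ j (fun i => (Finset.Ioi i).card)]
    have hcount : (∑ i : Fin d, if j ∈ Finset.Ioi i then 1 else 0) = (j : ℕ) := by
      have : ∀ i : Fin d, (if j ∈ Finset.Ioi i then 1 else 0) = if i < j then 1 else 0 := by
        intro i; simp [Finset.mem_Ioi]
      rw [Finset.sum_congr rfl fun i _ => this i, Finset.sum_boole]
      have : Finset.univ.filter (fun i : Fin d => i < j) = Finset.Iio j := by
        ext i; simp [Finset.mem_Iio]
      rw [this]
      simp [Fin.card_Iio]
    rw [hcount, if_pos (Finset.mem_univ j), Fin.card_Ioi]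
  have hj := j.isLt
  omega

lemma QsuppBound (lam : Fin d → ℕ) (N : ℕ)
    (hN : ∀ i : Fin d, lam i + 2 * d ≤ N)
    {u : Fin d →₀ ℕ}
    (hu : u ∈ ((Matrix.det (Matrix.of fun i j : Fin d =>
        (X j : MvPolynomial (Fin d) R) ^ (lam i + (d - ((i : ℕ) + 1))))) *
      (∏ i : Fin d, ∏ j ∈ Finset.Ioi i, (X i + X j))).support) :
    ∀ j : Fin d, u j + 1 ≤ N := by
  classical
  intro j
  have hu' := MvPolynomial.support_mul _ _ hu
  rw [Finset.mem_add] at hu'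
  obtain ⟨u₁, h₁, u₂, h₂, rfl⟩ := hu'
  rw [detExpand] at h₁
  have h₁' := MvPolynomial.support_sum h₁
  rw [Finset.mem_biUnion] at h₁'
  obtain ⟨τ, _, hτ⟩ := h₁'
  rw [MvPolynomial.C_mul_monomial, mul_one] at hτ
  have hu₁ := MvPolynomial.support_monomial_subset hτ
  rw [Finset.mem_singleton] at hu₁
  subst hu₁
  have hb₂ := piSuppBound h₂ j
  have hb₁ : (Finsupp.equivFunOnFinite.symm ((fun i => lam i + (d - ((i : ℕ) + 1))) ∘ ⇑τ)) j
      = lam (τ j) + (d - (((τ j) : ℕ) + 1)) := by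
    simp
  have hl := hN (τ j)
  have hlt := (τ j).isLt
  have happ : (Finsupp.equivFunOnFinite.symm ((fun i => lam i + (d - ((i : ℕ) + 1))) ∘ ⇑τ) +
      u₂) j = lam (τ j) + (d - (((τ j) : ℕ) + 1)) + u₂ j := by
    rw [Finsupp.add_apply, hb₁]
  rw [happ]
  omega

end DegAux


lemma phiF_sub {R : Type*} [CommRing R] {d : ℕ} (w : (Fin d →₀ ℕ) → R)
    (P Q : MvPolynomial (Fin d) R) :
    phiF w (P - Q) = phiF w P - phiF w Q := by
  classical
  have hB : (P - Q).support ⊆ (P - Q).support ∪ P.support ∪ Q.support := by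
    intro x hx; exact Finset.mem_union_left _ (Finset.mem_union_left _ hx)
  have hP : P.support ⊆ (P - Q).support ∪ P.support ∪ Q.support := by
    intro x hx; exact Finset.mem_union_left _ (Finset.mem_union_right _ hx)
  have hQ : Q.support ⊆ (P - Q).support ∪ P.support ∪ Q.support := by
    intro x hx; exact Finset.mem_union_right _ hx
  rw [phiF_superset w _ hB, phiF_superset w _ hP, phiF_superset w _ hQ,
    ← Finset.sum_sub_distrib]
  refine Finset.sum_congr rfl fun u _ => ?_
  rw [MvPolynomial.coeff_sub]
  ring

section BAux
variable {R : Type*} [CommRing R] {d : ℕ}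

lemma antisym_A_zero :
    (∑ τ : Equiv.Perm (Fin d), ((Equiv.Perm.sign τ : ℤ) : MvPolynomial (Fin d) R) *
      MvPolynomial.rename ⇑τ
        ((monomial (Finsupp.equivFunOnFinite.symm fun j : Fin d => (j:ℕ)) (1:R)) *
            (∏ i : Fin d, ∏ j ∈ Finset.Ioi i, (X i + X j)) -
          monomial (Finsupp.equivFunOnFinite.symm fun j : Fin d => 2*(j:ℕ)) (1:R)))
    = 0 := by
  have expand : ∀ τ : Equiv.Perm (Fin d),
      ((Equiv.Perm.sign τ : ℤ) : MvPolynomial (Fin d) R) *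
        MvPolynomial.rename ⇑τ
          ((monomial (Finsupp.equivFunOnFinite.symm fun j : Fin d => (j:ℕ)) (1:R)) *
              (∏ i : Fin d, ∏ j ∈ Finset.Ioi i, (X i + X j)) -
            monomial (Finsupp.equivFunOnFinite.symm fun j : Fin d => 2*(j:ℕ)) (1:R))
      = (((Equiv.Perm.sign τ : ℤ) : MvPolynomial (Fin d) R) *
          MvPolynomial.rename ⇑τ
            (monomial (Finsupp.equivFunOnFinite.symm fun j : Fin d => (j:ℕ)) (1:R))) *
          (∏ i : Fin d, ∏ j ∈ Finset.Ioi i, (X i + X j))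
        - ((Equiv.Perm.sign τ : ℤ) : MvPolynomial (Fin d) R) *
          MvPolynomial.rename ⇑τ
            (monomial (Finsupp.equivFunOnFinite.symm fun j : Fin d => 2*(j:ℕ)) (1:R)) := by
    intro τ
    rw [map_sub, map_mul, rename_pairProd]
    ring
  rw [Finset.sum_congr rfl fun τ _ => expand τ, Finset.sum_sub_distrib, ← Finset.sum_mul,
    antisym_monomial, antisym_monomial, mul_comm, vand_id, sub_self]

lemma hA_coeff (v : Fin d →₀ ℕ) :
    (∑ τ : Equiv.Perm (Fin d), ((Equiv.Perm.sign τ : ℤ) : R) *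
      MvPolynomial.coeff (Finsupp.equivMapDomain (τ : Fin d ≃ Fin d) v)
        ((monomial (Finsupp.equivFunOnFinite.symm fun j : Fin d => (j:ℕ)) (1:R)) *
            (∏ i : Fin d, ∏ j ∈ Finset.Ioi i, (X i + X j)) -
          monomial (Finsupp.equivFunOnFinite.symm fun j : Fin d => 2*(j:ℕ)) (1:R)))
    = 0 := by
  classical
  set A : MvPolynomial (Fin d) R :=
    (monomial (Finsupp.equivFunOnFinite.symm fun j : Fin d => (j:ℕ)) (1:R)) *
        (∏ i : Fin d, ∏ j ∈ Finset.Ioi i, (X i + X j)) -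
      monomial (Finsupp.equivFunOnFinite.symm fun j : Fin d => 2*(j:ℕ)) (1:R) with hAdef
  have h0 := antisym_A_zero (R := R) (d := d)
  have h0c : MvPolynomial.coeff v (∑ τ : Equiv.Perm (Fin d),
      ((Equiv.Perm.sign τ : ℤ) : MvPolynomial (Fin d) R) * MvPolynomial.rename ⇑τ A) = 0 := by
    rw [← hAdef] at h0
    rw [h0, MvPolynomial.coeff_zero]
  rw [MvPolynomial.coeff_sum] at h0c
  have hterm : ∀ τ : Equiv.Perm (Fin d),
      MvPolynomial.coeff v
          (((Equiv.Perm.sign τ : ℤ) : MvPolynomial (Fin d) R) * MvPolynomial.rename ⇑τ A)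
        = ((Equiv.Perm.sign τ : ℤ) : R) *
          MvPolynomial.coeff (Finsupp.equivMapDomain ((τ⁻¹ : Equiv.Perm (Fin d)) :
            Fin d ≃ Fin d) v) A := by
    intro τ
    have hcast : ((Equiv.Perm.sign τ : ℤ) : MvPolynomial (Fin d) R)
        = MvPolynomial.C (((Equiv.Perm.sign τ : ℤ) : R)) := by
      rw [map_intCast (MvPolynomial.C : R →+* MvPolynomial (Fin d) R)]
    rw [hcast, MvPolynomial.coeff_C_mul]
    congr 1
    have hv : v = Finsupp.mapDomain ⇑τ
        (Finsupp.equivMapDomain ((τ⁻¹ : Equiv.Perm (Fin d)) : Fin d ≃ Fin d) v) := by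
      rw [← Finsupp.equivMapDomain_eq_mapDomain, ← Finsupp.equivMapDomain_trans]
      have : (((τ⁻¹ : Equiv.Perm (Fin d)) : Fin d ≃ Fin d).trans (τ : Fin d ≃ Fin d))
          = Equiv.refl (Fin d) := by ext x; simp
      rw [this, Finsupp.equivMapDomain_refl]
    conv_lhs => rw [hv]
    exact MvPolynomial.coeff_rename_mapDomain ⇑τ τ.injective A _
  rw [Finset.sum_congr rfl fun τ _ => hterm τ] at h0c
  calc (∑ τ : Equiv.Perm (Fin d), ((Equiv.Perm.sign τ : ℤ) : R) *
        MvPolynomial.coeff (Finsupp.equivMapDomain (τ : Fin d ≃ Fin d) v) A)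
      = ∑ τ : Equiv.Perm (Fin d), ((Equiv.Perm.sign τ⁻¹ : ℤ) : R) *
        MvPolynomial.coeff (Finsupp.equivMapDomain ((τ⁻¹ : Equiv.Perm (Fin d)) :
          Fin d ≃ Fin d) v) A := by
        exact (Equiv.sum_comp (Equiv.inv (Equiv.Perm (Fin d)))
          (fun τ => ((Equiv.Perm.sign τ : ℤ) : R) *
            MvPolynomial.coeff (Finsupp.equivMapDomain (τ : Fin d ≃ Fin d) v) A)).symm
    _ = 0 := by
        rw [Finset.sum_congr rfl fun τ _ => by rw [Equiv.Perm.sign_inv]]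
        exact h0c


end BAux

/-- Algebraic core of Proposition 5.6 (type C Grassmann bundle): the coefficient of
`∏_j t_j^{N+2n-j}` in `det(t_j^{λ_i+d-i}) ⬝ ∏_{i<j}(t_i + t_j) ⬝ ∏_j Ŝ_N(t_j)` equals
`det(s(λ_i - (2n - d + 1 - i) + 2(j - i)))`. -/
theorem stmt_6 {R : Type*} [CommRing R] (n d : ℕ) (hn : 1 ≤ n)
    (hd1 : 1 ≤ d) (hd : d ≤ n)
    (lam : Fin d → ℕ) (s : ℤ → R) (hs : ∀ k : ℤ, k < 0 → s k = 0)
    (N : ℕ) (hN : ∀ i : Fin d, lam i + 2 * d ≤ N) :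
    MvPolynomial.coeff
      (Finsupp.equivFunOnFinite.symm fun j : Fin d => N + (2 * n - ((j : ℕ) + 1)))
      (Matrix.det (Matrix.of fun i j : Fin d =>
          MvPolynomial.X j ^ (lam i + (d - ((i : ℕ) + 1)))) *
        (∏ i : Fin d, ∏ j ∈ Finset.Ioi i,
          (MvPolynomial.X i + MvPolynomial.X j)) *
        ∏ j : Fin d, ∑ k ∈ Finset.range (N + 1),
          MvPolynomial.C (s k) * MvPolynomial.X j ^ (N - k))
    = Matrix.det (Matrix.of fun i j : Fin d =>
        s ((lam i : ℤ) - (2 * (n : ℤ) - (d : ℤ) + 1 - (((i : ℕ) : ℤ) + 1)) +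
          2 * (((j : ℕ) : ℤ) - ((i : ℕ) : ℤ)))) := by
  classical
  set Δ : MvPolynomial (Fin d) R := Matrix.det (Matrix.of fun i j : Fin d =>
      MvPolynomial.X j ^ (lam i + (d - ((i : ℕ) + 1)))) with hΔ
  set P : MvPolynomial (Fin d) R :=
    ∏ i : Fin d, ∏ j ∈ Finset.Ioi i, (MvPolynomial.X i + MvPolynomial.X j) with hP
  set S : MvPolynomial (Fin d) R := ∏ j : Fin d, ∑ k ∈ Finset.range (N + 1),
      MvPolynomial.C (s k) * MvPolynomial.X j ^ (N - k) with hS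
  set e : Fin d →₀ ℕ :=
    Finsupp.equivFunOnFinite.symm fun j : Fin d => N + (2 * n - ((j : ℕ) + 1)) with he
  set W : (Fin d →₀ ℕ) → R :=
    fun u => ∏ j : Fin d, s ((u j : ℤ) + (((j : ℕ) : ℤ) + 1) - 2 * (n : ℤ)) with hW
  set G : (Fin d →₀ ℕ) → R := fun u => Matrix.det (Matrix.of fun i j : Fin d =>
      s (((lam i + (d - ((i : ℕ) + 1)) : ℕ) : ℤ) + (u j : ℤ) + 1 - 2 * (n : ℤ))) with hG
  set idxF : Fin d →₀ ℕ := Finsupp.equivFunOnFinite.symm fun j : Fin d => (j : ℕ) with hidxF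
  set idx2F : Fin d →₀ ℕ :=
    Finsupp.equivFunOnFinite.symm fun j : Fin d => 2 * (j : ℕ) with hidx2F
  have hej : ∀ j : Fin d, e j = N + (2 * n - ((j : ℕ) + 1)) := by
    intro j; rw [he]; simp
  -- Step 1 : coefficient extraction
  have hQB : (Δ * P).support ⊆ (Finset.HasAntidiagonal.antidiagonal e).image Prod.fst := by
    intro u hu
    have hb := QsuppBound lam N hN (by rw [hΔ, hP] at hu; exact hu)
    have hle : u ≤ e := by
      rw [Finsupp.le_def]
      intro j
      have h1 := hb j
      have h2 := hej j
      have h3 := j.isLt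
      omega
    refine Finset.mem_image.mpr ⟨(u, e - u), ?_, rfl⟩
    rw [Finset.HasAntidiagonal.mem_antidiagonal]
    exact add_tsub_cancel_of_le hle
  have hstep1 : MvPolynomial.coeff e (Δ * P * S) = phiF W (Δ * P) := by
    rw [MvPolynomial.coeff_mul]
    have hterm : ∀ p ∈ Finset.HasAntidiagonal.antidiagonal e,
        MvPolynomial.coeff p.1 (Δ * P) * MvPolynomial.coeff p.2 S
          = MvPolynomial.coeff p.1 (Δ * P) * W p.1 := by
      intro p hp
      rw [hS, SCoeff s hs N p.2, hW]
      congr 1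
      refine Finset.prod_congr rfl fun j _ => ?_
      congr 1
      have hpadd : p.1 j + p.2 j = e j := by
        rw [← Finset.HasAntidiagonal.mem_antidiagonal.mp hp]; rfl
      have h2 := hej j
      have h3 := j.isLt
      omega
    rw [Finset.sum_congr rfl hterm]
    have hinj : ∀ p ∈ Finset.HasAntidiagonal.antidiagonal e, ∀ q ∈ Finset.HasAntidiagonal.antidiagonal e,
        p.1 = q.1 → p = q := by
      intro p hp q hq hpq
      have h1 := Finset.HasAntidiagonal.mem_antidiagonal.mp hp
      have h2 := Finset.HasAntidiagonal.mem_antidiagonal.mp hq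
      have h3 : p.2 = q.2 := by
        apply add_left_cancel (a := p.1)
        rw [h1, hpq, h2]
      exact Prod.ext hpq h3
    rw [phiF_superset W (Δ * P) hQB]
    exact (Finset.sum_image (s := Finset.HasAntidiagonal.antidiagonal e) (g := Prod.fst) (f := fun u => MvPolynomial.coeff u (Δ * P) * W u) hinj).symm
  -- Step 2 : from W to G
  have hΔP : Δ * P = ∑ τ : Equiv.Perm (Fin d),
      MvPolynomial.C ((Equiv.Perm.sign τ : ℤ) : R) *
        (monomial (Finsupp.equivFunOnFinite.symm
            ((fun i : Fin d => lam i + (d - ((i : ℕ) + 1))) ∘ ⇑τ)) (1:R) * P) := by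
    rw [hΔ, detExpand (fun i : Fin d => lam i + (d - ((i : ℕ) + 1))), Finset.sum_mul]
    exact Finset.sum_congr rfl fun τ _ => by ring
  have hGdet : ∀ β : Fin d →₀ ℕ,
      (∑ τ : Equiv.Perm (Fin d), ((Equiv.Perm.sign τ : ℤ) : R) *
        W (Finsupp.equivFunOnFinite.symm
            ((fun i : Fin d => lam i + (d - ((i : ℕ) + 1))) ∘ ⇑τ) + β))
      = G (idxF + β) := by
    intro β
    rw [hG]
    dsimp only
    rw [Matrix.det_apply']
    refine Finset.sum_congr rfl fun τ _ => ?_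
    congr 1
    rw [hW]
    dsimp only
    refine Finset.prod_congr rfl fun j _ => ?_
    rw [Matrix.of_apply]
    congr 1
    have h1 : (Finsupp.equivFunOnFinite.symm
        ((fun i : Fin d => lam i + (d - ((i : ℕ) + 1))) ∘ ⇑τ) + β) j
        = (lam (τ j) + (d - (((τ j) : ℕ) + 1))) + β j := by
      rw [Finsupp.add_apply]; simp
    have h2 : (idxF + β) j = (j : ℕ) + β j := by
      rw [Finsupp.add_apply, hidxF]; simp
    rw [h1, h2]
    push_cast
    ring
  have hstep2 : phiF W (Δ * P) = phiF G (monomial idxF (1:R) * P) := by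
    rw [hΔP, phiF_sum]
    have h1 : ∀ τ : Equiv.Perm (Fin d),
        phiF W (MvPolynomial.C ((Equiv.Perm.sign τ : ℤ) : R) *
          (monomial (Finsupp.equivFunOnFinite.symm
              ((fun i : Fin d => lam i + (d - ((i : ℕ) + 1))) ∘ ⇑τ)) (1:R) * P))
        = ((Equiv.Perm.sign τ : ℤ) : R) *
            ∑ β ∈ P.support, MvPolynomial.coeff β P *
              W (Finsupp.equivFunOnFinite.symm
                  ((fun i : Fin d => lam i + (d - ((i : ℕ) + 1))) ∘ ⇑τ) + β) := by
      intro τ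
      rw [phiF_C_mul, phiF_monomial_mul]
      rfl
    rw [Finset.sum_congr rfl fun τ _ => h1 τ]
    rw [phiF_monomial_mul]
    show _ = ∑ β ∈ P.support, MvPolynomial.coeff β P * G (idxF + β)
    rw [Finset.sum_congr rfl fun τ _ => Finset.mul_sum _ _ _, Finset.sum_comm]
    refine Finset.sum_congr rfl fun β _ => ?_
    rw [← hGdet β, Finset.mul_sum]
    refine Finset.sum_congr rfl fun τ _ => ?_
    ring
  -- Step 3 : core cancellation
  have hG0 : ∀ u : Fin d →₀ ℕ, ¬ Function.Injective ⇑u → G u = 0 := by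
    intro u hni
    obtain ⟨x, y, hxy, hne⟩ := Function.not_injective_iff.mp hni
    rw [hG]
    dsimp only
    refine Matrix.det_zero_of_column_eq hne fun k => ?_
    rw [Matrix.of_apply, Matrix.of_apply, hxy]
  have hGperm : ∀ (π : Equiv.Perm (Fin d)) (u : Fin d →₀ ℕ),
      G (Finsupp.equivMapDomain (π : Fin d ≃ Fin d) u)
        = ((Equiv.Perm.sign π : ℤ) : R) * G u := by
    intro π u
    rw [hG]
    dsimp only
    have hmat : (Matrix.of fun i j : Fin d =>
        s (((lam i + (d - ((i : ℕ) + 1)) : ℕ) : ℤ) +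
          ((Finsupp.equivMapDomain (π : Fin d ≃ Fin d) u) j : ℤ) + 1 - 2 * (n : ℤ)))
        = (Matrix.of fun i j : Fin d =>
            s (((lam i + (d - ((i : ℕ) + 1)) : ℕ) : ℤ) + (u j : ℤ) + 1 - 2 * (n : ℤ))).submatrix
          id ⇑(π⁻¹ : Equiv.Perm (Fin d)) := by
      ext i j
      rw [Matrix.submatrix_apply, Matrix.of_apply, Matrix.of_apply, id_eq,
        Finsupp.equivMapDomain_apply]
      rfl
    rw [hmat, Matrix.det_permute']
    congr 1
    rw [Equiv.Perm.sign_inv]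
  have hstep3 : phiF G (monomial idxF (1:R) * P) = phiF G (monomial idx2F (1:R)) := by
    have hzero : phiF G (monomial idxF (1:R) * P - monomial idx2F (1:R)) = 0 := by
      refine phiF_eq_zero_of_antisym G hG0 hGperm _ fun v => ?_
      rw [hidxF, hidx2F, hP]
      exact hA_coeff v
    rw [phiF_sub] at hzero
    exact sub_eq_zero.mp hzero
  -- Step 4 : evaluate
  have hstep4 : phiF G (monomial idx2F (1:R))
      = Matrix.det (Matrix.of fun i j : Fin d =>
          s ((lam i : ℤ) - (2 * (n : ℤ) - (d : ℤ) + 1 - (((i : ℕ) : ℤ) + 1)) +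
            2 * (((j : ℕ) : ℤ) - ((i : ℕ) : ℤ)))) := by
    rw [phiF_monomial, one_mul, hG]
    dsimp only
    congr 1
    ext i j
    rw [Matrix.of_apply, Matrix.of_apply]
    congr 1
    have h1 : (idx2F j : ℤ) = 2 * (j : ℕ) := by rw [hidx2F]; simp
    have h2 : (i : ℕ) + 1 ≤ d := i.isLt
    rw [h1]
    omega
  rw [hstep1, hstep2, hstep3, hstep4]
end

section
/- Let R be a commutative ring, r ≥ 2 and 1 ≤ d ≤ ⌊r/2⌋ integers. Let λ = (λ_1,…,λ_d) ∈ ℕ^d, let s : ℤ → R satisfy s(k) = 0 for all k < 0, and let N ∈ ℕ satisfy N ≥ λ_i + 2d for all i. Then the coefficient of the monomial ∏_{j=1}^{d} t_j^{N+r−1−j} in the polynomial det((t_j^{λ_i+d−i})_{1≤i,j≤d}) · ∏_{1≤i<j≤d}(t_i + t_j) · ∏_{j=1}^{d} Ŝ_N(t_j) equals the determinant of the d×d matrix whose (i,j) entry is s(λ_i − (r − d − i) + 2(j − i)). -/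
open MvPolynomial Finset

section StmtAux

variable {R : Type*} [CommRing R] {d : ℕ}


variable {R : Type*} [CommRing R] {d : ℕ}

lemma prod_monomial {ι : Type*} (s : Finset ι) (f : ι → (Fin d →₀ ℕ)) (b : ι → R) :
    ∏ x ∈ s, (monomial (f x) (b x)) = monomial (∑ x ∈ s, f x) (∏ x ∈ s, b x) := by
  classical
  induction s using Finset.cons_induction with
  | empty => simp [monomial_eq]
  | cons a s ha ih =>
      rw [Finset.prod_cons, Finset.sum_cons, Finset.prod_cons, ih, monomial_mul]

lemma sum_single_eq_s7 (h : Fin d → ℕ) :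
    (∑ j : Fin d, Finsupp.single j (h j)) = Finsupp.equivFunOnFinite.symm h := by
  ext i
  simp [Finsupp.single_apply, Finsupp.finset_sum_apply]

example (π : Equiv.Perm (Fin d)) (u : Fin d →₀ ℕ) (j : Fin d) :
    Finsupp.equivMapDomain (π⁻¹ : Equiv.Perm (Fin d)) u j = u (π j) := by
  simp [Finsupp.equivMapDomain_apply, Equiv.Perm.inv_def]

lemma coeff_Sprod (s : ℤ → R) (hs : ∀ k : ℤ, k < 0 → s k = 0) (N : ℕ) (u : Fin d →₀ ℕ) :
    coeff u (∏ j : Fin d, ∑ k ∈ Finset.range (N + 1), C (s k) * X j ^ (N - k))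
      = ∏ j : Fin d, s ((N : ℤ) - u j) := by
  classical
  have hfac : ∀ j : Fin d, (∑ k ∈ Finset.range (N + 1), C (s (k:ℕ)) * X j ^ (N - k))
      = ∑ k ∈ Finset.range (N + 1), monomial (Finsupp.single j (N - k)) (s k) := by
    intro j
    refine Finset.sum_congr rfl fun k _ => ?_
    rw [X_pow_eq_monomial, C_mul_monomial, mul_one]
  simp_rw [hfac]
  rw [Finset.prod_univ_sum]
  simp_rw [prod_monomial, coeff_sum, coeff_monomial]
  by_cases hu : ∀ j : Fin d, u j ≤ N
  · rw [Finset.sum_eq_single (fun j : Fin d => N - u j)]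
    · rw [if_pos]
      · refine Finset.prod_congr rfl fun j _ => ?_
        congr 1
        have := hu j
        push_cast [Nat.cast_sub (Nat.sub_le N (u j))]
        omega
      · ext i
        rw [Finsupp.finset_sum_apply]
        simp only [Finsupp.single_apply]
        rw [Finset.sum_ite_eq' Finset.univ i fun j => N - (N - u j)]
        simp [Nat.sub_sub_self (hu i)]
    · intro g hg hne
      rw [if_neg]
      intro hEq
      apply hne
      funext j
      have : (∑ x : Fin d, Finsupp.single x (N - g x)) j = u j := by rw [hEq]
      rw [Finsupp.finset_sum_apply] at this
      simp only [Finsupp.single_apply] at this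
      rw [Finset.sum_ite_eq' Finset.univ j fun x => N - (g x)] at this
      simp only [Finset.mem_univ, if_pos] at this
      have hgj : g j ≤ N := by
        have := Fintype.mem_piFinset.mp hg j
        simp [Finset.mem_range] at this; omega
      omega
    · intro h
      exact absurd (by simp [Fintype.mem_piFinset, Finset.mem_range]) h
  · push_neg at hu
    obtain ⟨j0, hj0⟩ := hu
    rw [Finset.sum_eq_zero, Eq.comm, Finset.prod_eq_zero (Finset.mem_univ j0)]
    · apply hs; push_cast; omega
    · intro g hg
      rw [if_neg]
      intro hEq
      have : (∑ x : Fin d, Finsupp.single x (N - g x)) j0 = u j0 := by rw [hEq]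
      rw [Finsupp.finset_sum_apply] at this
      simp only [Finsupp.single_apply] at this
      rw [Finset.sum_ite_eq' Finset.univ j0 fun x => N - (g x)] at this
      simp only [Finset.mem_univ, if_pos] at this
      omega

def Pairs (d : ℕ) : Finset (Σ _ : Fin d, Fin d) := Finset.univ.sigma fun i => Finset.Ioi i

noncomputable def eT {d : ℕ} (T : Finset (Σ _ : Fin d, Fin d)) : Fin d →₀ ℕ :=
  (∑ p ∈ T, Finsupp.single p.1 1) + ∑ p ∈ (Pairs d) \ T, Finsupp.single p.2 1

lemma Vexpand :
    (∏ i : Fin d, ∏ j ∈ Finset.Ioi i, (X (R := R) i + X j))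
      = ∑ T ∈ (Pairs d).powerset, monomial (eT T) 1 := by
  classical
  rw [← Finset.prod_sigma (Finset.univ) (fun i => Finset.Ioi i)
    (fun p => X (R := R) p.1 + X p.2)]
  rw [Finset.prod_add]
  refine Finset.sum_congr rfl fun T hT => ?_
  have h1 : ∀ p : (Σ _ : Fin d, Fin d), X (R := R) p.1 = monomial (Finsupp.single p.1 1) 1 := by
    intro p; rw [← X_pow_eq_monomial, pow_one]
  have h2 : ∀ p : (Σ _ : Fin d, Fin d), X (R := R) p.2 = monomial (Finsupp.single p.2 1) 1 := by
    intro p; rw [← X_pow_eq_monomial, pow_one]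
  simp_rw [h1, h2, prod_monomial, monomial_mul, Finset.prod_const_one, mul_one]
  rfl

lemma mem_Pairs (p : Σ _ : Fin d, Fin d) : p ∈ Pairs d ↔ p.1 < p.2 := by
  cases p; simp [Pairs, Finset.mem_sigma]

lemma rename_V (π : Equiv.Perm (Fin d)) :
    rename ⇑π (∏ i : Fin d, ∏ j ∈ Finset.Ioi i, (X (R := R) i + X j))
      = ∏ i : Fin d, ∏ j ∈ Finset.Ioi i, (X (R := R) i + X j) := by
  classical
  rw [← Finset.prod_sigma (Finset.univ) (fun i => Finset.Ioi i)
    (fun p => X (R := R) p.1 + X p.2)]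
  rw [map_prod]
  simp only [map_add, rename_X]
  have key : ∀ (ρ : Equiv.Perm (Fin d)) (p : Σ _ : Fin d, Fin d), p ∈ Pairs d →
      (if ρ p.1 < ρ p.2 then (⟨ρ p.1, ρ p.2⟩ : Σ _ : Fin d, Fin d) else ⟨ρ p.2, ρ p.1⟩)
        ∈ Pairs d := by
    intro ρ p hp
    rw [mem_Pairs] at hp ⊢
    split_ifs with h
    · exact h
    · rcases lt_or_eq_of_le (not_lt.mp h) with h' | h'
      · exact h'
      · exact absurd (ρ.injective h') hp.ne'
  refine Finset.prod_nbij'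
    (fun p => if π p.1 < π p.2 then ⟨π p.1, π p.2⟩ else ⟨π p.2, π p.1⟩)
    (fun q => if π⁻¹ q.1 < π⁻¹ q.2 then ⟨π⁻¹ q.1, π⁻¹ q.2⟩ else ⟨π⁻¹ q.2, π⁻¹ q.1⟩)
    (fun p hp => key π p hp) (fun q hq => key π⁻¹ q hq) ?_ ?_ ?_
  · intro p hp
    have hp : p.1 < p.2 := (mem_Pairs p).mp hp
    split_ifs <;> simp_all <;> first | rfl | (exfalso; omega) | skip
  · intro q hq
    have hq : q.1 < q.2 := (mem_Pairs q).mp hq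
    split_ifs <;> simp_all <;> first | rfl | (exfalso; omega) | skip
  · intro p hp
    split_ifs with h
    · rfl
    · exact add_comm _ _

noncomputable def Asym {d : ℕ} (P : MvPolynomial (Fin d) R) : MvPolynomial (Fin d) R :=
  ∑ π : Equiv.Perm (Fin d), Equiv.Perm.sign π • rename ⇑π P

lemma Asym_key :
    Asym ((∏ j : Fin d, X (R := R) j ^ (j : ℕ)) *
        ∏ i : Fin d, ∏ j ∈ Finset.Ioi i, (X i + X j))
      = Asym (∏ j : Fin d, X (R := R) j ^ (2 * (j : ℕ))) := by
  classical
  have h1 : Asym ((∏ j : Fin d, X (R := R) j ^ (j : ℕ)) *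
        ∏ i : Fin d, ∏ j ∈ Finset.Ioi i, (X i + X j))
      = Matrix.det (Matrix.of fun i j : Fin d => X (R := R) i ^ (j : ℕ)) *
        ∏ i : Fin d, ∏ j ∈ Finset.Ioi i, (X i + X j) := by
    rw [Asym, Matrix.det_apply, Finset.sum_mul]
    refine Finset.sum_congr rfl fun π _ => ?_
    rw [map_mul, rename_V, smul_mul_assoc]
    congr 2
    rw [map_prod]
    simp only [map_pow, rename_X, Matrix.of_apply]
  have h2 : Asym (∏ j : Fin d, X (R := R) j ^ (2 * (j : ℕ)))
      = Matrix.det (Matrix.of fun i j : Fin d => (X (R := R) i ^ 2) ^ (j : ℕ)) := by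
    rw [Asym, Matrix.det_apply]
    refine Finset.sum_congr rfl fun π _ => ?_
    congr 1
    rw [map_prod]
    simp only [map_pow, rename_X, Matrix.of_apply]
    exact Finset.prod_congr rfl fun j _ => by rw [pow_mul]
  rw [h1, h2]
  have hv1 : Matrix.det (Matrix.of fun i j : Fin d => X (R := R) i ^ (j : ℕ))
      = ∏ i : Fin d, ∏ j ∈ Finset.Ioi i, (X (R := R) j - X i) := Matrix.det_vandermonde _
  have hv2 : Matrix.det (Matrix.of fun i j : Fin d => (X (R := R) i ^ 2) ^ (j : ℕ))
      = ∏ i : Fin d, ∏ j ∈ Finset.Ioi i, (X (R := R) j ^ 2 - X i ^ 2) :=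
    Matrix.det_vandermonde _
  rw [hv1, hv2, mul_comm, ← Finset.prod_mul_distrib]
  refine Finset.prod_congr rfl fun i _ => ?_
  rw [← Finset.prod_mul_distrib]
  exact Finset.prod_congr rfl fun j _ => by ring

noncomputable def Kdet (s : ℤ → R) (B : Fin d → ℤ) (u : Fin d → ℕ) : R :=
  Matrix.det (Matrix.of fun i j : Fin d => s (B i + u j))

lemma Kdet_zero (s : ℤ → R) (B : Fin d → ℤ) (u : Fin d → ℕ)
    (hu : ¬ Function.Injective u) : Kdet s B u = 0 := by
  rw [Function.not_injective_iff] at hu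
  obtain ⟨a, b, hab, hne⟩ := hu
  exact Matrix.det_zero_of_column_eq hne fun k => by simp [hab]

lemma Kdet_perm (s : ℤ → R) (B : Fin d → ℤ) (π : Equiv.Perm (Fin d)) (u : Fin d → ℕ) :
    Kdet s B (fun j => u (π j)) = (Equiv.Perm.sign π : ℤ) • Kdet s B u := by
  have : (Matrix.of fun i j : Fin d => s (B i + u (π j)))
      = (Matrix.of fun i j : Fin d => s (B i + u j)).submatrix id ⇑π := rfl
  rw [Kdet, this, Matrix.det_permute', Kdet, zsmul_eq_mul]

noncomputable def act {d : ℕ} (π : Equiv.Perm (Fin d)) (u : Fin d →₀ ℕ) : Fin d →₀ ℕ :=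
  Finsupp.equivMapDomain (π⁻¹ : Equiv.Perm (Fin d)) u

lemma act_apply (π : Equiv.Perm (Fin d)) (u : Fin d →₀ ℕ) (j : Fin d) :
    act π u j = u (π j) := by
  simp [act, Finsupp.equivMapDomain_apply, Equiv.Perm.inv_def]

lemma coe_act (π : Equiv.Perm (Fin d)) (u : Fin d →₀ ℕ) :
    ⇑(act π u) = ⇑u ∘ ⇑π := funext fun j => act_apply π u j

lemma act_act (π π' : Equiv.Perm (Fin d)) (u : Fin d →₀ ℕ) :
    act π (act π' u) = act (π' * π) u := by
  ext j; simp [act_apply, Equiv.Perm.mul_apply]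

lemma act_one (u : Fin d →₀ ℕ) : act 1 u = u := by ext j; simp [act_apply]

lemma coeff_Asym (P : MvPolynomial (Fin d) ℤ) (w : Fin d →₀ ℕ) :
    coeff w (Asym P) = ∑ π : Equiv.Perm (Fin d), (Equiv.Perm.sign π : ℤ) * coeff (act π w) P := by
  rw [Asym, coeff_sum]
  refine Finset.sum_congr rfl fun π _ => ?_
  rw [coeff_smul]
  have : coeff w (rename (⇑π) P) = coeff (act π w) P := by
    have hw : Finsupp.mapDomain ⇑π (act π w) = w := by
      ext j
      rw [Finsupp.mapDomain_equiv_apply]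
      simp [act_apply, Equiv.Perm.inv_def]
    conv_lhs => rw [← hw]
    exact coeff_rename_mapDomain _ π.injective _ _
  rw [this, Units.smul_def, zsmul_eq_mul]
  norm_cast

lemma core (s : ℤ → R) (B : Fin d → ℤ) (U : Finset (Fin d →₀ ℕ))
    (hU : ∀ u ∈ U, ∀ π : Equiv.Perm (Fin d), act π u ∈ U)
    (P : MvPolynomial (Fin d) ℤ) :
    ∑ u ∈ U, coeff u P • Kdet s B ⇑u
      = ∑ w ∈ U.filter (fun w : Fin d →₀ ℕ => StrictMono ⇑w),
          coeff w (Asym P) • Kdet s B ⇑w := by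
  classical
  rw [← Finset.sum_filter_add_sum_filter_not U (fun u : Fin d →₀ ℕ => Function.Injective ⇑u)]
  have hz : ∑ u ∈ U.filter (fun u : Fin d →₀ ℕ => ¬ Function.Injective ⇑u), coeff u P • Kdet s B ⇑u = 0 := by
    refine Finset.sum_eq_zero fun u hu => ?_
    rw [Kdet_zero s B ⇑u (Finset.mem_filter.mp hu).2, smul_zero]
  rw [hz, add_zero]
  have step2 : ∑ u ∈ U.filter (fun u : Fin d →₀ ℕ => Function.Injective ⇑u), coeff u P • Kdet s B ⇑u
      = ∑ p ∈ (U.filter (fun w : Fin d →₀ ℕ => StrictMono ⇑w)) ×ˢ (Finset.univ : Finset (Equiv.Perm (Fin d))),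
          ((Equiv.Perm.sign p.2 : ℤ) * coeff (act p.2 p.1) P) • Kdet s B ⇑p.1 := by
    refine Finset.sum_nbij'
      (i := fun u => (act (Tuple.sort ⇑u) u, (Tuple.sort ⇑u)⁻¹))
      (j := fun p => act p.2 p.1) ?_ ?_ ?_ ?_ ?_
    · intro u hu
      obtain ⟨huU, huinj⟩ := Finset.mem_filter.mp hu
      refine Finset.mem_product.mpr ⟨Finset.mem_filter.mpr ⟨hU u huU _, ?_⟩, Finset.mem_univ _⟩
      rw [coe_act]
      exact Monotone.strictMono_of_injective (Tuple.monotone_sort ⇑u)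
        (huinj.comp (Tuple.sort ⇑u).injective)
    · intro p hp
      obtain ⟨hw, -⟩ := Finset.mem_product.mp hp
      obtain ⟨hwU, hwmono⟩ := Finset.mem_filter.mp hw
      refine Finset.mem_filter.mpr ⟨hU _ hwU _, ?_⟩
      rw [coe_act]
      exact hwmono.injective.comp p.2.injective
    · intro u hu
      dsimp only
      rw [act_act, mul_inv_cancel, act_one]
    · intro p hp
      obtain ⟨hw, -⟩ := Finset.mem_product.mp hp
      obtain ⟨hwU, hwmono⟩ := Finset.mem_filter.mp hw
      obtain ⟨w, π⟩ := p
      have hsort : Tuple.sort ⇑(act π w) = π⁻¹ := by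
        have hmono : Monotone (⇑(act π w) ∘ ⇑(π⁻¹ : Equiv.Perm (Fin d))) := by
          have : ⇑(act π w) ∘ ⇑(π⁻¹ : Equiv.Perm (Fin d)) = ⇑w := by
            rw [coe_act]; funext j; simp
          rw [this]; exact hwmono.monotone
        have := Tuple.comp_sort_eq_comp_iff_monotone.mpr hmono
        have hinj : Function.Injective ⇑(act π w) := by
          rw [coe_act]; exact hwmono.injective.comp π.injective
        apply Equiv.ext
        intro x
        have := congrFun this x
        simp only [Function.comp_apply] at this
        exact (hinj this).symm ▸ (hinj this).symm
      simp only [hsort, Prod.mk.injEq]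
      constructor
      · rw [act_act, mul_inv_cancel, act_one]
      · rw [inv_inv]
    · intro u hu
      obtain ⟨huU, huinj⟩ := Finset.mem_filter.mp hu
      dsimp only
      rw [act_act, mul_inv_cancel, act_one, coe_act]
      have hperm := Kdet_perm s B (Tuple.sort ⇑u) ⇑u
      have : ⇑u ∘ ⇑(Tuple.sort ⇑u) = fun j => u ((Tuple.sort ⇑u) j) := rfl
      rw [this, hperm, smul_smul]
      congr 1
      rw [Equiv.Perm.sign_inv]
      rcases Int.units_eq_one_or (Equiv.Perm.sign (Tuple.sort ⇑u)) with h | h <;>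
        rw [h] <;> simp
  rw [step2, Finset.sum_product]
  refine Finset.sum_congr rfl fun w hw => ?_
  rw [coeff_Asym, Finset.sum_smul]

lemma main_comb (s : ℤ → R) (B : Fin d → ℤ) :
    ∑ T ∈ (Pairs d).powerset,
      Kdet s B ⇑((Finsupp.equivFunOnFinite.symm fun j : Fin d => (j : ℕ)) + eT T)
    = Kdet s B ⇑(Finsupp.equivFunOnFinite.symm fun j : Fin d => 2 * (j : ℕ)) := by
  classical
  set δF : Fin d →₀ ℕ := Finsupp.equivFunOnFinite.symm fun j : Fin d => (j : ℕ) with hδF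
  set v2 : Fin d →₀ ℕ := Finsupp.equivFunOnFinite.symm fun j : Fin d => 2 * (j : ℕ) with hv2
  set P₁ : MvPolynomial (Fin d) ℤ :=
    ∑ T ∈ (Pairs d).powerset, monomial (δF + eT T) 1 with hP₁
  set P₂ : MvPolynomial (Fin d) ℤ := monomial v2 1 with hP₂
  set U : Finset (Fin d →₀ ℕ) :=
    (insert v2 ((Pairs d).powerset.image (fun T => δF + eT T))).biUnion
      (fun u => Finset.image (fun π : Equiv.Perm (Fin d) => act π u) Finset.univ) with hUdef
  have hmem0 : ∀ x ∈ insert v2 ((Pairs d).powerset.image (fun T => δF + eT T)), x ∈ U := by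
    intro x hx
    exact Finset.mem_biUnion.mpr ⟨x, hx,
      Finset.mem_image.mpr ⟨1, Finset.mem_univ _, act_one x⟩⟩
  have hU : ∀ u ∈ U, ∀ π : Equiv.Perm (Fin d), act π u ∈ U := by
    intro u hu π
    rcases Finset.mem_biUnion.mp hu with ⟨u0, hu0, himg⟩
    rcases Finset.mem_image.mp himg with ⟨π0, -, rfl⟩
    exact Finset.mem_biUnion.mpr ⟨u0, hu0,
      Finset.mem_image.mpr ⟨π0 * π, Finset.mem_univ _, (act_act π π0 u0).symm⟩⟩
  have hsum1 : ∑ u ∈ U, coeff u P₁ • Kdet s B ⇑u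
      = ∑ T ∈ (Pairs d).powerset, Kdet s B ⇑(δF + eT T) := by
    rw [hP₁]
    simp_rw [coeff_sum, coeff_monomial, Finset.sum_smul]
    rw [Finset.sum_comm]
    refine Finset.sum_congr rfl fun T hT => ?_
    simp_rw [ite_smul, one_smul, zero_smul]
    rw [Finset.sum_ite_eq]
    rw [if_pos (hmem0 _ (Finset.mem_insert_of_mem (Finset.mem_image_of_mem _ hT)))]
  have hsum2 : ∑ u ∈ U, coeff u P₂ • Kdet s B ⇑u = Kdet s B ⇑v2 := by
    rw [hP₂]
    simp_rw [coeff_monomial, ite_smul, one_smul, zero_smul]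
    rw [Finset.sum_ite_eq]
    rw [if_pos (hmem0 _ (Finset.mem_insert_self _ _))]
  have hXδ : (∏ j : Fin d, X (R := ℤ) j ^ (j : ℕ)) = monomial δF 1 := by
    have h : ∀ j : Fin d, X (R := ℤ) j ^ (j : ℕ) = monomial (Finsupp.single j (j : ℕ)) 1 :=
      fun j => X_pow_eq_monomial
    simp_rw [h, prod_monomial, Finset.prod_const_one, sum_single_eq_s7]
    rfl
  have hX2δ : (∏ j : Fin d, X (R := ℤ) j ^ (2 * (j : ℕ))) = monomial v2 1 := by
    have h : ∀ j : Fin d, X (R := ℤ) j ^ (2 * (j : ℕ))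
        = monomial (Finsupp.single j (2 * (j : ℕ))) 1 := fun j => X_pow_eq_monomial
    simp_rw [h, prod_monomial, Finset.prod_const_one, sum_single_eq_s7]
    rfl
  have hAsym : Asym P₁ = Asym P₂ := by
    have e1 : P₁ = (∏ j : Fin d, X (R := ℤ) j ^ (j : ℕ)) *
        ∏ i : Fin d, ∏ j ∈ Finset.Ioi i, (X i + X j) := by
      rw [Vexpand (R := ℤ), Finset.mul_sum, hP₁]
      refine Finset.sum_congr rfl fun T hT => ?_
      rw [hXδ, monomial_mul, one_mul]
    have e2 : P₂ = ∏ j : Fin d, X (R := ℤ) j ^ (2 * (j : ℕ)) := by rw [hX2δ, hP₂]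
    rw [e1, e2, Asym_key]
  rw [← hsum1, ← hsum2, core s B U hU P₁, core s B U hU P₂, hAsym]

lemma eT_le (T : Finset (Σ _ : Fin d, Fin d)) (hT : T ⊆ Pairs d) (j : Fin d) :
    eT T j ≤ d - 1 := by
  classical
  have happ : eT T j = (T.filter fun p => p.1 = j).card
      + (((Pairs d) \ T).filter fun p => p.2 = j).card := by
    rw [eT, Finsupp.add_apply, Finsupp.finset_sum_apply, Finsupp.finset_sum_apply]
    simp_rw [Finsupp.single_apply]
    rw [Finset.sum_boole, Finset.sum_boole]
    norm_num
  have hA : (T.filter fun p => p.1 = j).card ≤ (Finset.Ioi j).card := by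
    refine Finset.card_le_card_of_injOn (fun p => p.2) ?_ ?_
    · intro p hp
      obtain ⟨hpT, hp1⟩ := Finset.mem_filter.mp hp
      have := (mem_Pairs p).mp (hT hpT)
      simp only [Finset.mem_coe, Finset.mem_Ioi]; rw [← hp1]; exact this
    · intro p hp q hq hpq
      obtain ⟨-, hp1⟩ := Finset.mem_filter.mp hp
      obtain ⟨-, hq1⟩ := Finset.mem_filter.mp hq
      cases p; cases q
      simp only at hp1 hq1 hpq
      subst hp1; subst hq1; subst hpq; rfl
  have hB : (((Pairs d) \ T).filter fun p => p.2 = j).card ≤ (Finset.Iio j).card := by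
    refine Finset.card_le_card_of_injOn (fun p => p.1) ?_ ?_
    · intro p hp
      obtain ⟨hpP, hp2⟩ := Finset.mem_filter.mp hp
      have := (mem_Pairs p).mp (Finset.mem_sdiff.mp hpP).1
      simp only [Finset.mem_coe, Finset.mem_Iio]
      rw [← hp2]; exact this
    · intro p hp q hq hpq
      obtain ⟨-, hp1⟩ := Finset.mem_filter.mp hp
      obtain ⟨-, hq1⟩ := Finset.mem_filter.mp hq
      cases p; cases q
      simp only at hp1 hq1 hpq
      subst hp1; subst hq1; subst hpq; rfl
  rw [happ]
  have h1 := Fin.card_Ioi j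
  have h2 := Fin.card_Iio j
  have hj : (j : ℕ) < d := j.isLt
  omega


end StmtAux

set_option maxHeartbeats 1000000 in
/-- Algebraic core of Proposition 5.8 (types B and D Grassmann bundle): the coefficient
of `∏_j t_j^{N+r-1-j}` in `det(t_j^{λ_i+d-i}) ⬝ ∏_{i<j}(t_i + t_j) ⬝ ∏_j Ŝ_N(t_j)`
equals `det(s(λ_i - (r - d - i) + 2(j - i)))`. -/
theorem stmt_7 {R : Type*} [CommRing R] (r d : ℕ) (hr : 2 ≤ r)
    (hd1 : 1 ≤ d) (hd : d ≤ r / 2)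
    (lam : Fin d → ℕ) (s : ℤ → R) (hs : ∀ k : ℤ, k < 0 → s k = 0)
    (N : ℕ) (hN : ∀ i : Fin d, lam i + 2 * d ≤ N) :
    MvPolynomial.coeff
      (Finsupp.equivFunOnFinite.symm fun j : Fin d => N + (r - 1 - ((j : ℕ) + 1)))
      (Matrix.det (Matrix.of fun i j : Fin d =>
          MvPolynomial.X j ^ (lam i + (d - ((i : ℕ) + 1)))) *
        (∏ i : Fin d, ∏ j ∈ Finset.Ioi i,
          (MvPolynomial.X i + MvPolynomial.X j)) *
        ∏ j : Fin d, ∑ k ∈ Finset.range (N + 1),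
          MvPolynomial.C (s k) * MvPolynomial.X j ^ (N - k))
    = Matrix.det (Matrix.of fun i j : Fin d =>
        s ((lam i : ℤ) - ((r : ℤ) - (d : ℤ) - (((i : ℕ) : ℤ) + 1)) +
          2 * (((j : ℕ) : ℤ) - ((i : ℕ) : ℤ)))) := by
  classical
  have hrd : 2 * d ≤ r := by
    have := (Nat.le_div_iff_mul_le (by norm_num : 0 < 2)).mp hd
    omega
  set B : Fin d → ℤ := fun i => (lam i : ℤ) + d + 1 - r - (i : ℕ) with hB
  set cF : Fin d →₀ ℕ := Finsupp.equivFunOnFinite.symm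
      (fun j : Fin d => N + (r - 1 - ((j : ℕ) + 1))) with hcF
  have key : MvPolynomial.coeff cF
      (Matrix.det (Matrix.of fun i j : Fin d =>
          MvPolynomial.X j ^ (lam i + (d - ((i : ℕ) + 1)))) *
        (∏ i : Fin d, ∏ j ∈ Finset.Ioi i,
          (MvPolynomial.X i + MvPolynomial.X j)) *
        ∏ j : Fin d, ∑ k ∈ Finset.range (N + 1),
          MvPolynomial.C (s k) * MvPolynomial.X j ^ (N - k))
      = ∑ T ∈ (Pairs d).powerset,
          Kdet s B ⇑((Finsupp.equivFunOnFinite.symm fun j : Fin d => (j : ℕ)) + eT T) := by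
    rw [Matrix.det_apply, Vexpand]
    simp only [Matrix.of_apply]
    rw [Finset.sum_mul, Finset.sum_mul]
    rw [coeff_sum]
    have hterm : ∀ σ : Equiv.Perm (Fin d), σ ∈ (Finset.univ : Finset (Equiv.Perm (Fin d))) →
        coeff cF ((Equiv.Perm.sign σ • ∏ i : Fin d, X (R := R) i ^ (lam (σ i) + (d - ((σ i : ℕ) + 1)))) *
            (∑ T ∈ (Pairs d).powerset, monomial (eT T) 1) *
          ∏ j : Fin d, ∑ k ∈ Finset.range (N + 1), C (s k) * X j ^ (N - k))
        = ∑ T ∈ (Pairs d).powerset, Equiv.Perm.sign σ •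
            ∏ j : Fin d, s (B (σ j) +
              (((Finsupp.equivFunOnFinite.symm fun j : Fin d => (j : ℕ)) + eT T) j : ℕ)) := by
      intro σ _
      rw [Finset.mul_sum, Finset.sum_mul, coeff_sum]
      refine Finset.sum_congr rfl fun T hT => ?_
      have hT' : T ⊆ Pairs d := Finset.mem_powerset.mp hT
      have hP : (∏ i : Fin d, X (R := R) i ^ (lam (σ i) + (d - ((σ i : ℕ) + 1))))
          = monomial (Finsupp.equivFunOnFinite.symm
              fun i : Fin d => lam (σ i) + (d - ((σ i : ℕ) + 1))) 1 := by
        have h : ∀ i : Fin d, X (R := R) i ^ (lam (σ i) + (d - ((σ i : ℕ) + 1)))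
            = monomial (Finsupp.single i (lam (σ i) + (d - ((σ i : ℕ) + 1)))) 1 :=
          fun i => X_pow_eq_monomial
        simp_rw [h]
        rw [prod_monomial, Finset.prod_const_one, sum_single_eq_s7]
      rw [hP, smul_mul_assoc, smul_mul_assoc, coeff_smul, monomial_mul, one_mul]
      congr 1
      set aF : Fin d →₀ ℕ := Finsupp.equivFunOnFinite.symm
          (fun i : Fin d => lam (σ i) + (d - ((σ i : ℕ) + 1))) with haF
      have hle : aF + eT T ≤ cF := by
        rw [Finsupp.le_def]
        intro j
        have he := eT_le T hT' j
        have hNj := hN (σ j)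
        have hj : (j : ℕ) < d := j.isLt
        have hσj : ((σ j : Fin d) : ℕ) < d := (σ j).isLt
        rw [Finsupp.add_apply, haF, hcF]
        simp only [Finsupp.coe_equivFunOnFinite_symm]
        omega
      rw [coeff_monomial_mul', if_pos hle, one_mul, coeff_Sprod s hs N]
      refine Finset.prod_congr rfl fun j _ => ?_
      congr 1
      have he := eT_le T hT' j
      have hNj := hN (σ j)
      have hj : (j : ℕ) < d := j.isLt
      have hσj : ((σ j : Fin d) : ℕ) < d := (σ j).isLt
      have hlej := Finsupp.le_def.mp hle j
      rw [Finsupp.tsub_apply, Finsupp.add_apply, Finsupp.add_apply, haF, hcF] at *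
      simp only [Finsupp.coe_equivFunOnFinite_symm] at *
      have hBv : B (σ j) = (lam (σ j) : ℤ) + d + 1 - r - ((σ j : Fin d) : ℕ) := rfl
      rw [hBv]
      omega
    rw [Finset.sum_congr rfl hterm, Finset.sum_comm]
    refine Finset.sum_congr rfl fun T hT => ?_
    rw [Kdet, Matrix.det_apply]
    refine Finset.sum_congr rfl fun σ _ => ?_
    simp only [Matrix.of_apply]
  rw [key, main_comb]
  rw [Kdet]
  congr 1
  ext i j
  simp only [Matrix.of_apply, Finsupp.coe_equivFunOnFinite_symm]
  congr 1
  push_cast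
  ring
end

section
/- Let R be a commutative ring and r ≥ 2 an integer. In the multivariate polynomial ring R[t_1,…,t_{r−1}], the coefficient of the monomial t_1^{r−1}·t_2^{r−1}⋯t_{r−1}^{r−1} in the product (∏_{i=1}^{r−1} t_i^{i}) · ∏_{1≤i<j≤r−1}(t_i − t_j) equals 1 (where for r = 2 the product over pairs is empty, hence equal to 1). -/
open MvPolynomial Finset in
private lemma prod_X_pow_fin {R : Type*} [CommRing R] {n : ℕ} (d : Fin n → ℕ) :
    (∏ i : Fin n, (X i : MvPolynomial (Fin n) R) ^ d i)
      = monomial (Finsupp.equivFunOnFinite.symm d) 1 := by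
  classical
  rw [← MvPolynomial.prod_X_pow_eq_monomial]
  exact (Finset.prod_subset (Finset.subset_univ _) (fun x _ hx => by
    have hx0 : d x = 0 := by simpa using Finsupp.notMem_support_iff.mp hx
    rw [hx0, pow_zero])).symm

open MvPolynomial Finset in
private lemma key_coeff {R : Type*} [CommRing R] (n : ℕ) :
    MvPolynomial.coeff
      (Finsupp.equivFunOnFinite.symm fun _ : Fin n => n)
      ((∏ i : Fin n, MvPolynomial.X i ^ ((i : ℕ) + 1)) *
        ∏ i : Fin n, ∏ j ∈ Finset.Ioi i,
          (MvPolynomial.X i - MvPolynomial.X j))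
    = (1 : R) := by
  classical
  have hP : (∏ i : Fin n, ∏ j ∈ Finset.Ioi i,
        (X i - X j : MvPolynomial (Fin n) R))
      = (Matrix.vandermonde fun i : Fin n => (X i.rev : MvPolynomial (Fin n) R)).det := by
    rw [Matrix.det_vandermonde]
    calc ∏ i : Fin n, ∏ j ∈ Ioi i, (X i - X j : MvPolynomial (Fin n) R)
        = ∏ j : Fin n, ∏ i ∈ Iio j, (X i - X j) :=
          Finset.prod_comm' (by simp)
      _ = ∏ i : Fin n, ∏ j ∈ Ioi i,
            ((X j.rev : MvPolynomial (Fin n) R) - X i.rev) := by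
          refine Fintype.prod_equiv Fin.revPerm _ _ fun j => ?_
          refine Finset.prod_nbij' Fin.rev Fin.rev ?_ ?_ ?_ ?_ ?_
          · intro a ha
            simp only [Finset.mem_Iio] at ha
            simp only [Finset.mem_Ioi]
            exact Fin.lt_rev_iff.mp (by simpa using ha)
          · intro a ha
            simp only [Finset.mem_Ioi] at ha
            simp only [Finset.mem_Iio]
            exact Fin.rev_lt_iff.mpr (by simpa using ha)
          · intro a _; exact Fin.rev_rev a
          · intro a _; exact Fin.rev_rev a
          · intro a _; simp [Fin.rev_rev]
  rw [hP, Matrix.det_apply, Finset.mul_sum]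
  have hterm : ∀ σ : Equiv.Perm (Fin n),
      (∏ i : Fin n, (X i : MvPolynomial (Fin n) R) ^ ((i : ℕ) + 1)) *
        (Equiv.Perm.sign σ • ∏ i : Fin n,
          Matrix.vandermonde (fun i : Fin n => (X i.rev : MvPolynomial (Fin n) R)) (σ i) i)
      = Equiv.Perm.sign σ •
          monomial (Finsupp.equivFunOnFinite.symm
            fun i : Fin n => (i : ℕ) + 1 + ((σ.trans Fin.revPerm).symm i : ℕ)) 1 := by
    intro σ
    rw [mul_smul_comm]
    congr 1
    have h1 : (∏ i : Fin n,
        Matrix.vandermonde (fun i : Fin n => (X i.rev : MvPolynomial (Fin n) R)) (σ i) i)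
        = ∏ i : Fin n, (X i : MvPolynomial (Fin n) R) ^ (((σ.trans Fin.revPerm).symm i : Fin n) : ℕ) := by
      rw [← Equiv.prod_comp (σ.trans Fin.revPerm)
        (fun k => (X k : MvPolynomial (Fin n) R) ^ (((σ.trans Fin.revPerm).symm k : Fin n) : ℕ))]
      refine Finset.prod_congr rfl fun i _ => ?_
      simp [Matrix.vandermonde, Equiv.symm_apply_apply, Fin.revPerm]
    rw [h1, ← Finset.prod_mul_distrib]
    simp_rw [← pow_add]
    exact prod_X_pow_fin _
  rw [MvPolynomial.coeff_sum]
  simp_rw [hterm, MvPolynomial.coeff_smul, MvPolynomial.coeff_monomial]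
  have hcond : ∀ σ : Equiv.Perm (Fin n),
      ((Finsupp.equivFunOnFinite.symm
          fun i : Fin n => (i : ℕ) + 1 + ((σ.trans Fin.revPerm).symm i : ℕ))
        = Finsupp.equivFunOnFinite.symm fun _ : Fin n => n) ↔ σ = 1 := by
    intro σ
    rw [Equiv.apply_eq_iff_eq, funext_iff]
    constructor
    · intro h
      have hs : ∀ k : Fin n, σ.symm k = k := by
        intro k
        have hh := h k.rev
        rw [Equiv.symm_trans_apply] at hh
        have e1 : Fin.revPerm.symm k.rev = k := by
          rw [Fin.revPerm_symm]; exact Fin.rev_rev k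
        rw [e1] at hh
        have e2 : ((k.rev : Fin n) : ℕ) = n - ((k : ℕ) + 1) := Fin.val_rev k
        have hk := k.isLt
        have hsk := (σ.symm k).isLt
        exact Fin.ext (by omega)
      ext i
      have h2 := hs (σ i)
      rw [Equiv.symm_apply_apply] at h2
      simp only [Equiv.Perm.coe_one, id_eq]
      exact congrArg Fin.val h2.symm
    · intro h i
      subst h
      have hi : (i : ℕ) < n := i.isLt
      have e : (((1 : Equiv.Perm (Fin n)).trans Fin.revPerm).symm i : ℕ)
          = n - ((i : ℕ) + 1) := by
        rw [Equiv.symm_trans_apply, Fin.revPerm_symm]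
        simp [Fin.val_rev, Equiv.Perm.one_symm]
      omega
  simp_rw [hcond]
  have : ∀ σ : Equiv.Perm (Fin n),
      (Equiv.Perm.sign σ • if σ = 1 then (1 : R) else 0)
        = if σ = 1 then (Equiv.Perm.sign σ • (1 : R)) else 0 := by
    intro σ; split <;> simp
  simp_rw [this]
  rw [Finset.sum_ite_eq' Finset.univ (1 : Equiv.Perm (Fin n))]
  simp

/-- The key computation in the "useful particular case" (equation (2.2)): the coefficient
of `t_1^{r-1}⋯t_{r-1}^{r-1}` in `(∏_i t_i^i) ⬝ ∏_{i<j}(t_i - t_j)` equals `1`. -/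
theorem stmt_10 {R : Type*} [CommRing R] (r : ℕ) (hr : 2 ≤ r) :
    MvPolynomial.coeff
      (Finsupp.equivFunOnFinite.symm fun _ : Fin (r - 1) => r - 1)
      ((∏ i : Fin (r - 1), MvPolynomial.X i ^ ((i : ℕ) + 1)) *
        ∏ i : Fin (r - 1), ∏ j ∈ Finset.Ioi i,
          (MvPolynomial.X i - MvPolynomial.X j))
    = (1 : R) := by
  exact key_coeff (r - 1)
end

section
/- Let R be a commutative ring and r ≥ 3 an integer. Then the coefficient of the monomial ∏_{i=1}^{r−1} t_i^{r−1} in (∏_{i=1}^{r−1} t_i^{i}) · ∏_{1≤i<j≤r−1}(t_i − t_j), taken in R[t_1,…,t_{r−1}], equals the coefficient of the monomial ∏_{i=1}^{r−2} t_i^{r−2} in (∏_{i=1}^{r−2} t_i^{i}) · ∏_{1≤i<j≤r−2}(t_i − t_j), taken in R[t_1,…,t_{r−2}]. -/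
namespace Stmt11Aux
open MvPolynomial Finset

variable {R : Type*} [CommRing R]

lemma vand_rev (n : ℕ) :
    (∏ i : Fin n, ∏ j ∈ Finset.Ioi i, (X i - X j) : MvPolynomial (Fin n) R)
      = Matrix.det (Matrix.vandermonde fun k => (X (Fin.rev k) : MvPolynomial (Fin n) R)) := by
  rw [Matrix.det_vandermonde,
    Finset.prod_sigma' univ (fun i : Fin n => Ioi i)
      (fun i j => (X i - X j : MvPolynomial (Fin n) R)),
    Finset.prod_sigma' univ (fun i : Fin n => Ioi i)
      (fun i j => (X (Fin.rev j) - X (Fin.rev i) : MvPolynomial (Fin n) R))]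
  refine Finset.prod_nbij' (fun p => ⟨Fin.rev p.2, Fin.rev p.1⟩)
    (fun p => ⟨Fin.rev p.2, Fin.rev p.1⟩) ?_ ?_ ?_ ?_ ?_
  · rintro ⟨i, j⟩ h
    simp only [Finset.mem_sigma, Finset.mem_univ, Finset.mem_Ioi, true_and] at h ⊢
    exact Fin.rev_lt_rev.mpr h
  · rintro ⟨i, j⟩ h
    simp only [Finset.mem_sigma, Finset.mem_univ, Finset.mem_Ioi, true_and] at h ⊢
    exact Fin.rev_lt_rev.mpr h
  · rintro ⟨i, j⟩ h; simp
  · rintro ⟨i, j⟩ h; simp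
  · rintro ⟨i, j⟩ h; simp

lemma key (n : ℕ) :
    (MvPolynomial.coeff (Finsupp.equivFunOnFinite.symm fun _ : Fin n => n)
      ((∏ i : Fin n, X i ^ ((i:ℕ)+1)) *
        ∏ i : Fin n, ∏ j ∈ Finset.Ioi i, (X i - X j)) : R) = 1 := by
  classical
  set d : Fin n →₀ ℕ := Finsupp.equivFunOnFinite.symm fun _ => n with hdd
  set m₀ : Fin n →₀ ℕ := ∑ i : Fin n, Finsupp.single i ((i:ℕ)+1) with hm₀d
  have hprod : (∏ i : Fin n, X i ^ ((i:ℕ)+1) : MvPolynomial (Fin n) R)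
      = monomial m₀ 1 := by
    rw [hm₀d, monomial_sum_one]
    exact Finset.prod_congr rfl fun i _ => X_pow_eq_monomial
  have hm₀ : ∀ k : Fin n, m₀ k = (k:ℕ)+1 := by
    intro k
    simp only [hm₀d, Finsupp.finset_sum_apply, Finsupp.single_apply]
    rw [Finset.sum_ite_eq' Finset.univ k (fun x => (x:ℕ)+1)]
    simp
  have hd : ∀ k : Fin n, d k = n := fun k => rfl
  have hle : m₀ ≤ d := by
    rw [Finsupp.le_def]
    intro k
    rw [hm₀ k, hd k]
    exact k.isLt
  rw [hprod, coeff_monomial_mul', if_pos hle, one_mul]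
  have hd' : ∀ k : Fin n, (d - m₀) k = (Fin.rev k : ℕ) := by
    intro k
    rw [Finsupp.tsub_apply, hm₀ k, hd k, Fin.val_rev]
  rw [vand_rev, Matrix.det_apply, MvPolynomial.coeff_sum]
  have hterm : ∀ σ : Equiv.Perm (Fin n),
      coeff (d - m₀) (∏ i, (Matrix.vandermonde fun k =>
        (X (Fin.rev k) : MvPolynomial (Fin n) R)) (σ i) i)
      = if σ = 1 then 1 else 0 := by
    intro σ
    have h1 : (∏ i, (Matrix.vandermonde fun k =>
        (X (Fin.rev k) : MvPolynomial (Fin n) R)) (σ i) i)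
        = monomial (∑ i : Fin n, Finsupp.single (Fin.rev (σ i)) (i:ℕ)) 1 := by
      rw [monomial_sum_one]
      exact Finset.prod_congr rfl fun i _ => by
        rw [Matrix.vandermonde_apply, X_pow_eq_monomial]
    rw [h1, coeff_monomial]
    have happ : ∀ k : Fin n,
        (∑ i : Fin n, Finsupp.single (Fin.rev (σ i)) (i:ℕ)) k
          = ((σ⁻¹ (Fin.rev k) : Fin n) : ℕ) := by
      intro k
      rw [Finsupp.finset_sum_apply]
      rw [Finset.sum_eq_single (σ⁻¹ (Fin.rev k))]
      · simp
      · intro i _ hi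
        rw [Finsupp.single_apply, if_neg]
        intro hc
        exact hi (by rw [← hc, Fin.rev_rev]; simp)
      · simp
    by_cases hσ : σ = 1
    · rw [if_pos hσ, if_pos]
      subst hσ
      ext k
      rw [happ k, hd' k]
      simp
    · rw [if_neg hσ, if_neg]
      intro hc
      apply hσ
      have : ∀ k : Fin n, σ⁻¹ k = k := by
        intro k
        have := DFunLike.congr_fun hc (Fin.rev k)
        rw [happ, hd'] at this
        simp only [Fin.rev_rev] at this
        exact Fin.val_injective this
      ext k
      conv_lhs => rw [← this k]
      simp
  rw [Finset.sum_congr rfl fun σ _ => by rw [MvPolynomial.coeff_smul, hterm σ]]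
  rw [Finset.sum_eq_single 1]
  · simp
  · intro σ _ hσ; rw [if_neg hσ, smul_zero]
  · simp

end Stmt11Aux


/-- The induction step in the "useful particular case" (equation (2.2)): the coefficient
of `∏_{i=1}^{r-1} t_i^{r-1}` in `(∏_{i=1}^{r-1} t_i^i) ⬝ ∏_{1≤i<j≤r-1}(t_i - t_j)` equals
the coefficient of `∏_{i=1}^{r-2} t_i^{r-2}` in
`(∏_{i=1}^{r-2} t_i^i) ⬝ ∏_{1≤i<j≤r-2}(t_i - t_j)`. -/
theorem stmt_11 {R : Type*} [CommRing R] (r : ℕ) (hr : 3 ≤ r) :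
    (MvPolynomial.coeff
      (Finsupp.equivFunOnFinite.symm fun _ : Fin (r - 1) => r - 1)
      ((∏ i : Fin (r - 1), MvPolynomial.X i ^ ((i : ℕ) + 1)) *
        ∏ i : Fin (r - 1), ∏ j ∈ Finset.Ioi i,
          (MvPolynomial.X i - MvPolynomial.X j)) : R)
    = MvPolynomial.coeff
      (Finsupp.equivFunOnFinite.symm fun _ : Fin (r - 2) => r - 2)
      ((∏ i : Fin (r - 2), MvPolynomial.X i ^ ((i : ℕ) + 1)) *
        ∏ i : Fin (r - 2), ∏ j ∈ Finset.Ioi i,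
          (MvPolynomial.X i - MvPolynomial.X j)) := by
  rw [Stmt11Aux.key (r-1), Stmt11Aux.key (r-2)]
end

section
/- Let R be a commutative ring, d ≥ 1 an integer, s : ℤ → R with s(k) = 0 for all k < 0, and let λ = (λ_1,…,λ_d) ∈ ℕ^d and e = (e_1,…,e_d) ∈ ℕ^d be arbitrary exponent vectors. Let N ∈ ℕ satisfy N ≥ λ_j + d − 1 for all j, and set Ŝ_N(x) := Σ_{k=0}^{N} s(k)·x^{N−k}. Then the coefficient of the monomial ∏_{j=1}^{d} t_j^{N+e_j} in the polynomial (∏_{j=1}^{d} t_j^{λ_j}) · ∏_{1≤i<j≤d}(t_i − t_j) · ∏_{j=1}^{d} Ŝ_N(t_j) equals the determinant of the d×d matrix whose (i,j) entry is s(λ_j + d − i − e_j). -/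
open MvPolynomial Finset

section Aux

variable {R : Type*} [CommRing R] {d : ℕ}

lemma aux_rev_prod (f : Fin d → Fin d → MvPolynomial (Fin d) R) :
    (∏ i : Fin d, ∏ j ∈ Finset.Ioi i, f (Fin.rev j) (Fin.rev i))
      = ∏ i : Fin d, ∏ j ∈ Finset.Ioi i, f i j := by
  rw [Finset.prod_sigma', Finset.prod_sigma']
  refine Finset.prod_nbij' (fun p => ⟨Fin.rev p.2, Fin.rev p.1⟩)
    (fun p => ⟨Fin.rev p.2, Fin.rev p.1⟩) ?_ ?_ ?_ ?_ ?_
  · rintro ⟨a, b⟩ hab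
    rw [Finset.mem_sigma, Finset.mem_Ioi] at hab ⊢
    exact ⟨Finset.mem_univ _, Fin.rev_lt_rev.mpr hab.2⟩
  · rintro ⟨a, b⟩ hab
    rw [Finset.mem_sigma, Finset.mem_Ioi] at hab ⊢
    exact ⟨Finset.mem_univ _, Fin.rev_lt_rev.mpr hab.2⟩
  · rintro ⟨a, b⟩ _; simp
  · rintro ⟨a, b⟩ _; simp
  · rintro ⟨a, b⟩ _; rfl

lemma aux_vandermonde :
    (∏ i : Fin d, ∏ j ∈ Finset.Ioi i,
        (MvPolynomial.X i - MvPolynomial.X j : MvPolynomial (Fin d) R))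
      = Matrix.det (Matrix.of fun i j : Fin d =>
          (MvPolynomial.X j : MvPolynomial (Fin d) R) ^ ((Fin.rev i : Fin d) : ℕ)) := by
  have e2 : (Matrix.vandermonde fun i : Fin d =>
        (MvPolynomial.X (Fin.rev i) : MvPolynomial (Fin d) R))
      = (Matrix.vandermonde fun i : Fin d =>
          (MvPolynomial.X i : MvPolynomial (Fin d) R)).submatrix Fin.revPerm id := by
    ext i j; simp [Matrix.vandermonde_apply]
  have e3 : (Matrix.of fun i j : Fin d =>
        (MvPolynomial.X j : MvPolynomial (Fin d) R) ^ ((Fin.rev i : Fin d) : ℕ))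
      = (Matrix.transpose (Matrix.vandermonde fun i : Fin d =>
          (MvPolynomial.X i : MvPolynomial (Fin d) R))).submatrix Fin.revPerm id := by
    ext i j; simp [Matrix.vandermonde_apply]
  calc (∏ i : Fin d, ∏ j ∈ Finset.Ioi i,
        (MvPolynomial.X i - MvPolynomial.X j : MvPolynomial (Fin d) R))
      = ∏ i : Fin d, ∏ j ∈ Finset.Ioi i,
          ((MvPolynomial.X (Fin.rev j) : MvPolynomial (Fin d) R)
            - MvPolynomial.X (Fin.rev i)) :=
        (aux_rev_prod (fun a b => MvPolynomial.X a - MvPolynomial.X b)).symm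
    _ = Matrix.det (Matrix.vandermonde fun i : Fin d =>
          (MvPolynomial.X (Fin.rev i) : MvPolynomial (Fin d) R)) :=
        (Matrix.det_vandermonde _).symm
    _ = (Equiv.Perm.sign (Fin.revPerm : Equiv.Perm (Fin d)) : ℤ) *
          Matrix.det (Matrix.vandermonde fun i : Fin d =>
            (MvPolynomial.X i : MvPolynomial (Fin d) R)) := by
        rw [e2, Matrix.det_permute]
    _ = Matrix.det (Matrix.of fun i j : Fin d =>
          (MvPolynomial.X j : MvPolynomial (Fin d) R) ^ ((Fin.rev i : Fin d) : ℕ)) := by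
        rw [e3, Matrix.det_permute, Matrix.det_transpose]

lemma aux_coeff_prod (γ : Fin d → R) (b m : Fin d → ℕ) :
    MvPolynomial.coeff (Finsupp.equivFunOnFinite.symm m)
        (∏ j : Fin d, MvPolynomial.C (γ j) * MvPolynomial.X j ^ b j)
      = if b = m then ∏ j, γ j else 0 := by
  classical
  have h1 : (∏ j : Fin d, (MvPolynomial.X j : MvPolynomial (Fin d) R) ^ b j)
      = MvPolynomial.monomial (Finsupp.equivFunOnFinite.symm b) (1 : R) := by
    rw [MvPolynomial.monomial_eq, map_one, one_mul,
      Finsupp.prod_fintype _ _ (fun i => pow_zero _)]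
    simp
  rw [Finset.prod_mul_distrib, ← map_prod, h1, MvPolynomial.C_mul_monomial, mul_one,
    MvPolynomial.coeff_monomial]
  by_cases h : b = m
  · simp [h]
  · rw [if_neg, if_neg h]
    intro hc
    exact h (Finsupp.equivFunOnFinite.symm.injective hc)

lemma aux_prod_ite (P : Fin d → Prop) [DecidablePred P] (γ : Fin d → R) :
    (if (∀ j, P j) then ∏ j, γ j else 0) = ∏ j, if P j then γ j else 0 := by
  by_cases h : ∀ j, P j
  · simp [h]
  · push_neg at h
    obtain ⟨j, hj⟩ := h
    rw [if_neg (fun hall => hj (hall j))]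
    exact (Finset.prod_eq_zero (Finset.mem_univ j)
      (if_neg hj : (if P j then γ j else 0) = 0)).symm

lemma aux_coeff_prod_sum (c : ℕ → R) (a m : Fin d → ℕ) (N : ℕ) :
    MvPolynomial.coeff (Finsupp.equivFunOnFinite.symm m)
        (∏ j : Fin d, ∑ k ∈ Finset.range (N + 1),
          MvPolynomial.C (c k) * MvPolynomial.X j ^ (a j + (N - k)))
      = ∏ j : Fin d, ∑ k ∈ Finset.range (N + 1),
          if a j + (N - k) = m j then c k else 0 := by
  classical
  rw [Finset.prod_univ_sum, MvPolynomial.coeff_sum]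
  have h : ∀ p ∈ Fintype.piFinset (fun _ : Fin d => Finset.range (N + 1)),
      MvPolynomial.coeff (Finsupp.equivFunOnFinite.symm m)
          (∏ j : Fin d, MvPolynomial.C (c (p j)) * MvPolynomial.X j ^ (a j + (N - p j)))
        = ∏ j : Fin d, if a j + (N - p j) = m j then c (p j) else 0 := by
    intro p _
    rw [aux_coeff_prod]
    simp only [funext_iff]
    rw [aux_prod_ite]
  rw [Finset.sum_congr rfl h]
  exact Finset.sum_prod_piFinset (Finset.range (N + 1))
    (fun j k => if a j + (N - k) = m j then c k else 0)

lemma aux_sum_ite (s : ℤ → R) (hs : ∀ k : ℤ, k < 0 → s k = 0)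
    (a e N : ℕ) (ha : a ≤ N) :
    (∑ k ∈ Finset.range (N + 1), if a + (N - k) = N + e then s k else 0)
      = s ((a : ℤ) - e) := by
  by_cases h : e ≤ a
  · have hcong : ∀ k ∈ Finset.range (N + 1),
        (if a + (N - k) = N + e then s ((k : ℕ) : ℤ) else 0)
          = if k = a - e then s ((k : ℕ) : ℤ) else 0 := by
      intro k hk
      rw [Finset.mem_range] at hk
      exact if_congr (by omega) rfl rfl
    rw [Finset.sum_congr rfl hcong,
      Finset.sum_ite_eq' (Finset.range (N + 1)) (a - e),
      if_pos (Finset.mem_range.mpr (by omega))]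
    congr 1
    omega
  · have hcong : ∀ k ∈ Finset.range (N + 1),
        (if a + (N - k) = N + e then s ((k : ℕ) : ℤ) else 0) = 0 := by
      intro k hk
      rw [Finset.mem_range] at hk
      exact if_neg (by omega)
    rw [Finset.sum_congr rfl hcong, Finset.sum_const_zero]
    exact (hs _ (by omega)).symm

end Aux

/-- Intermediate determinantal identity in the proof of Proposition 5.2 (Vandermonde
expansion plus the linearity Lemma 5.1): for arbitrary exponents `e_j`, the coefficient
of `∏_j t_j^{N+e_j}` in `(∏_j t_j^{λ_j}) ⬝ ∏_{i<j}(t_i - t_j) ⬝ ∏_j Ŝ_N(t_j)` equals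
`det(s(λ_j + d - i - e_j))`. -/
theorem stmt_14 {R : Type*} [CommRing R] (d : ℕ) (hd : 1 ≤ d)
    (s : ℤ → R) (hs : ∀ k : ℤ, k < 0 → s k = 0)
    (lam : Fin d → ℕ) (e : Fin d → ℕ)
    (N : ℕ) (hN : ∀ j : Fin d, lam j + d - 1 ≤ N) :
    MvPolynomial.coeff
      (Finsupp.equivFunOnFinite.symm fun j : Fin d => N + e j)
      ((∏ j : Fin d, MvPolynomial.X j ^ lam j) *
        (∏ i : Fin d, ∏ j ∈ Finset.Ioi i,
          (MvPolynomial.X i - MvPolynomial.X j)) *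
        ∏ j : Fin d, ∑ k ∈ Finset.range (N + 1),
          MvPolynomial.C (s k) * MvPolynomial.X j ^ (N - k))
    = Matrix.det (Matrix.of fun i j : Fin d =>
        s ((lam j : ℤ) + (d : ℤ) - (((i : ℕ) : ℤ) + 1) - (e j : ℤ))) := by
  classical
  rw [aux_vandermonde, Matrix.det_apply', Matrix.det_apply']
  rw [Finset.mul_sum, Finset.sum_mul, MvPolynomial.coeff_sum]
  refine Finset.sum_congr rfl fun σ _ => ?_
  have hre : (∏ j : Fin d, (MvPolynomial.X j : MvPolynomial (Fin d) R) ^ lam j) *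
      (((Equiv.Perm.sign σ : ℤ) : MvPolynomial (Fin d) R) *
        ∏ i : Fin d, Matrix.of (fun i j : Fin d =>
          (MvPolynomial.X j : MvPolynomial (Fin d) R) ^ ((Fin.rev i : Fin d) : ℕ)) (σ i) i) *
      (∏ j : Fin d, ∑ k ∈ Finset.range (N + 1),
          MvPolynomial.C (s k) * MvPolynomial.X j ^ (N - k))
      = MvPolynomial.C ((Equiv.Perm.sign σ : ℤ) : R) *
        ∏ j : Fin d, ∑ k ∈ Finset.range (N + 1),
          MvPolynomial.C (s k) *
            MvPolynomial.X j ^ (lam j + ((Fin.rev (σ j) : Fin d) : ℕ) + (N - k)) := by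
    rw [← map_intCast (MvPolynomial.C : R →+* MvPolynomial (Fin d) R)]
    have hW : (∏ i : Fin d, Matrix.of (fun i j : Fin d =>
          (MvPolynomial.X j : MvPolynomial (Fin d) R) ^ ((Fin.rev i : Fin d) : ℕ)) (σ i) i)
        = ∏ i : Fin d, (MvPolynomial.X i : MvPolynomial (Fin d) R)
            ^ ((Fin.rev (σ i) : Fin d) : ℕ) := rfl
    rw [hW]
    have hAWS : (∏ j : Fin d, (MvPolynomial.X j : MvPolynomial (Fin d) R) ^ lam j) *
        (∏ i : Fin d, (MvPolynomial.X i : MvPolynomial (Fin d) R)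
            ^ ((Fin.rev (σ i) : Fin d) : ℕ)) *
        (∏ j : Fin d, ∑ k ∈ Finset.range (N + 1),
          MvPolynomial.C (s k) * MvPolynomial.X j ^ (N - k))
        = ∏ j : Fin d, ∑ k ∈ Finset.range (N + 1),
            MvPolynomial.C (s k) *
              MvPolynomial.X j ^ (lam j + ((Fin.rev (σ j) : Fin d) : ℕ) + (N - k)) := by
      rw [← Finset.prod_mul_distrib, ← Finset.prod_mul_distrib]
      refine Finset.prod_congr rfl fun j _ => ?_
      rw [Finset.mul_sum]
      refine Finset.sum_congr rfl fun k _ => ?_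
      rw [pow_add, pow_add]
      ring
    calc _ = MvPolynomial.C ((Equiv.Perm.sign σ : ℤ) : R) *
          ((∏ j : Fin d, (MvPolynomial.X j : MvPolynomial (Fin d) R) ^ lam j) *
          (∏ i : Fin d, (MvPolynomial.X i : MvPolynomial (Fin d) R)
              ^ ((Fin.rev (σ i) : Fin d) : ℕ)) *
          (∏ j : Fin d, ∑ k ∈ Finset.range (N + 1),
            MvPolynomial.C (s k) * MvPolynomial.X j ^ (N - k))) := by ring
      _ = _ := by rw [hAWS]
  rw [hre, MvPolynomial.coeff_C_mul, aux_coeff_prod_sum]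
  congr 1
  refine Finset.prod_congr rfl fun j _ => ?_
  have h1 : lam j + ((Fin.rev (σ j) : Fin d) : ℕ) ≤ N := by
    have h2 := hN j
    have h3 := (σ j).isLt
    rw [Fin.val_rev]
    omega
  rw [aux_sum_ite s hs _ _ _ h1]
  show s _ = s _
  congr 1
  have h3 := (σ j).isLt
  rw [Fin.val_rev]
  push_cast [Nat.cast_sub (by omega : (σ j : ℕ) + 1 ≤ d)]
  ring
end
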